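/- arXiv:1304.3600 — 5 statements merged into one kernel-verified Lean document; each statement's English description precedes it below -/
import Mathlib

section
/- For all n ≥ 3, L(C_n) = L(P_{n−1}) / (n · C(n−1, 2)), where C_n is the cycle graph on n vertices, P_{n−1} is the path graph on n−1 vertices, and C(n−1,2) is the binomial coefficient. -/
open Finset

/-- The number of neighbors `j` of vertex `i` with `j < i`. -/
noncomputable def dBelow {t : ℕ} (G' : SimpleGraph (Fin t)) (i : Fin t) : ℕ :=
  Set.ncard {j | G'.Adj i j ∧ j < i}

open Classical in
/-- The graph likelihood: the sum over all labeled copies `G'` of `G` on `{1,…,t}`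
of `1/(t! · ∏_{i=1}^t C(i-1, d_i(G')))`. -/
noncomputable def likelihood {t : ℕ} (G : SimpleGraph (Fin t)) : ℝ :=
  ∑ G' ∈ Finset.univ.filter (fun G' : SimpleGraph (Fin t) => Nonempty (G' ≃g G)),
    1 / ((t.factorial : ℝ) * ∏ i : Fin t, ((i : ℕ).choose (dBelow G' i) : ℝ))

namespace LikelihoodAux

open SimpleGraph Fin

variable {m : ℕ}

/-- Restriction of a graph on `Fin (m+3)` to the first `m+2` vertices. -/
def restr (G : SimpleGraph (Fin (m+3))) : SimpleGraph (Fin (m+2)) :=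
  G.comap Fin.castSucc

lemma restr_adj (G : SimpleGraph (Fin (m+3))) (a b : Fin (m+2)) :
    (restr G).Adj a b ↔ G.Adj a.castSucc b.castSucc := Iff.rfl

/-- The restriction of the standard cycle to the first `m+2` vertices is the standard path. -/
lemma cycle_restrict_adj (a b : Fin (m+2)) :
    (cycleGraph (m+3)).Adj a.castSucc b.castSucc ↔ (pathGraph (m+2)).Adj a b := by
  rw [cycleGraph_adj (n := m+1), pathGraph_adj]
  have ha := a.isLt; have hb := b.isLt
  have h1 : ((1 : Fin (m+3)) : ℕ) = 1 := rfl
  have ea : (((1:Fin (m+3)) :ℕ) + (a:ℕ)) % (m+3) = 1 + a := by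
    rw [h1]; exact Nat.mod_eq_of_lt (by omega)
  have eb : (((1:Fin (m+3)) :ℕ) + (b:ℕ)) % (m+3) = 1 + b := by
    rw [h1]; exact Nat.mod_eq_of_lt (by omega)
  simp only [sub_eq_iff_eq_add, Fin.ext_iff, Fin.val_add, Fin.coe_castSucc] at *
  simp only [show m+2+1 = m+3 from rfl] at *
  constructor
  · rintro (h | h) <;> omega
  · rintro (h | h) <;> [right; left] <;> omega

lemma cycle_ncard_adj (u : Fin (m+3)) :
    Set.ncard {y | (cycleGraph (m+3)).Adj u y} = 2 := by
  have h : {y | (cycleGraph (m+3)).Adj u y} = (cycleGraph (m+3)).neighborSet u := rfl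
  rw [h, cycleGraph_neighborSet (n := m+1)]
  apply Set.ncard_pair
  intro h2
  have : u + 1 = u + (-1 : Fin (m+3)) := by rw [← sub_eq_add_neg, h2]
  have h3 := add_left_cancel this
  have := congrArg Fin.val h3
  simp [Fin.ext_iff] at this

lemma iso_ncard_adj {V W : Type*} (G : SimpleGraph V) (C : SimpleGraph W)
    (e : G ≃g C) (v : V) :
    Set.ncard {y | C.Adj (e v) y} = Set.ncard {x | G.Adj v x} := by
  rw [← Set.ncard_image_of_injective {x | G.Adj v x} e.toEquiv.injective]
  congr 1
  ext y
  simp only [Set.mem_image, Set.mem_setOf_eq]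
  constructor
  · intro hy; exact ⟨e.symm y, by simpa using e.symm.map_adj_iff.mpr hy, by simp⟩
  · rintro ⟨x, hx, rfl⟩; exact e.map_adj_iff.mpr hx

/-- Any labeled copy of the cycle is 2-regular (ncard form). -/
lemma copy_ncard_adj (G : SimpleGraph (Fin (m+3))) (e : G ≃g cycleGraph (m+3))
    (v : Fin (m+3)) : Set.ncard {y | G.Adj v y} = 2 := by
  rw [← iso_ncard_adj G _ e v]
  exact cycle_ncard_adj (e v)

lemma restr_nbhd_image (G : SimpleGraph (Fin (m+3))) (v : Fin (m+2)) :
    Fin.castSucc '' {x | (restr G).Adj v x}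
      = {y | G.Adj v.castSucc y} \ {Fin.last (m+2)} := by
  ext y
  simp only [Set.mem_image, Set.mem_setOf_eq, Set.mem_diff, Set.mem_singleton_iff]
  constructor
  · rintro ⟨x, hx, rfl⟩
    exact ⟨hx, Fin.ne_of_lt (Fin.castSucc_lt_last x)⟩
  · rintro ⟨hy, hne⟩
    refine ⟨(y.castPred hne), ?_, by simp⟩
    rw [restr_adj, Fin.castSucc_castPred]
    exact hy

lemma restr_nbhd_ncard (G : SimpleGraph (Fin (m+3))) (v : Fin (m+2)) :
    Set.ncard {x | (restr G).Adj v x}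
      = ({y | G.Adj v.castSucc y} \ {Fin.last (m+2)}).ncard := by
  rw [← restr_nbhd_image, Set.ncard_image_of_injective _ (Fin.castSucc_injective _)]

/-- Characterization of adjacency to the top vertex in a labeled copy of the cycle. -/
lemma adj_top_iff (G : SimpleGraph (Fin (m+3))) (e : G ≃g cycleGraph (m+3))
    (v : Fin (m+2)) :
    G.Adj (Fin.last (m+2)) v.castSucc ↔ Set.ncard {x | (restr G).Adj v x} = 1 := by
  have h2 : Set.ncard {y | G.Adj v.castSucc y} = 2 := copy_ncard_adj G e _
  have hfin : {y | G.Adj v.castSucc y}.Finite := Set.toFinite _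
  rw [restr_nbhd_ncard]
  constructor
  · intro h
    have hmem : Fin.last (m+2) ∈ {y | G.Adj v.castSucc y} := h.symm
    rw [Set.ncard_diff_singleton_of_mem hmem, h2]
  · intro h
    by_contra hadj
    have hmem : Fin.last (m+2) ∉ {y | G.Adj v.castSucc y} := fun hc => hadj hc.symm
    rw [Set.diff_singleton_eq_self hmem, h2] at h
    omega

lemma dBelow_last (G : SimpleGraph (Fin (m+3))) (e : G ≃g cycleGraph (m+3)) :
    dBelow G (Fin.last (m+2)) = 2 := by
  have h : {j | G.Adj (Fin.last (m+2)) j ∧ j < Fin.last (m+2)}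
      = {j | G.Adj (Fin.last (m+2)) j} := by
    ext j
    simp only [Set.mem_setOf_eq, and_iff_left_iff_imp]
    intro hj
    exact Fin.lt_last_iff_ne_last.mpr (fun hc => (G.ne_of_adj hj) hc.symm)
  rw [dBelow, h]
  exact copy_ncard_adj G e _

lemma dBelow_castSucc (G : SimpleGraph (Fin (m+3))) (i : Fin (m+2)) :
    dBelow G i.castSucc = dBelow (restr G) i := by
  rw [dBelow, dBelow,
    ← Set.ncard_image_of_injective {j | (restr G).Adj i j ∧ j < i}
      (Fin.castSucc_injective (m+2))]
  congr 1
  ext y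
  simp only [Set.mem_image, Set.mem_setOf_eq]
  constructor
  · rintro ⟨hy, hlt⟩
    have hne : y ≠ Fin.last (m+2) := by
      intro hc
      have := Fin.castSucc_lt_last i
      rw [hc] at hlt
      exact absurd (hlt.trans this) (lt_irrefl _)
    refine ⟨y.castPred hne, ⟨?_, ?_⟩, by simp⟩
    · rw [restr_adj, Fin.castSucc_castPred]; exact hy
    · rw [← Fin.castSucc_lt_castSucc_iff, Fin.castSucc_castPred]; exact hlt
  · rintro ⟨x, ⟨hadj, hlt⟩, rfl⟩
    exact ⟨hadj, Fin.castSucc_lt_castSucc_iff.mpr hlt⟩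

/-- Rotation automorphism of the cycle. -/
def rot (c : Fin (m+3)) : cycleGraph (m+3) ≃g cycleGraph (m+3) where
  toEquiv := Equiv.addRight c
  map_rel_iff' := by
    intro a b
    simp only [Equiv.coe_addRight]
    rw [cycleGraph_adj (n := m+1), cycleGraph_adj (n := m+1)]
    simp [add_sub_add_right_eq_sub]

/-- Any labeled copy of the cycle has an isomorphism fixing the top vertex. -/
lemma exists_iso_fix (G : SimpleGraph (Fin (m+3))) (e : G ≃g cycleGraph (m+3)) :
    ∃ f : G ≃g cycleGraph (m+3), f (Fin.last (m+2)) = Fin.last (m+2) := by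
  refine ⟨e.trans (rot (Fin.last (m+2) - e (Fin.last (m+2)))), ?_⟩
  show e (Fin.last (m+2)) + (Fin.last (m+2) - e (Fin.last (m+2))) = Fin.last (m+2)
  abel

/-- Restriction of a labeled copy of the cycle is a labeled copy of the path. -/
lemma restr_iso_path (G : SimpleGraph (Fin (m+3))) (e : G ≃g cycleGraph (m+3)) :
    Nonempty (restr G ≃g pathGraph (m+2)) := by
  obtain ⟨f, hf⟩ := exists_iso_fix G e
  have hne : ∀ i : Fin (m+2), f i.castSucc ≠ Fin.last (m+2) := by
    intro i hc
    rw [← hf] at hc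
    have := f.toEquiv.injective hc
    exact absurd this (Fin.ne_of_lt (Fin.castSucc_lt_last i))
  have hne' : ∀ j : Fin (m+2), f.symm j.castSucc ≠ Fin.last (m+2) := by
    intro j hc
    have : j.castSucc = f (Fin.last (m+2)) := by
      rw [← hc]; simp
    rw [hf] at this
    exact absurd this (Fin.ne_of_lt (Fin.castSucc_lt_last j))
  refine ⟨⟨⟨fun i => (f i.castSucc).castPred (hne i),
    fun j => (f.symm j.castSucc).castPred (hne' j), ?_, ?_⟩, ?_⟩⟩
  · intro i
    apply Fin.castSucc_injective
    simp
  · intro j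
    apply Fin.castSucc_injective
    simp
  · intro a b
    show (pathGraph (m+2)).Adj _ _ ↔ (restr G).Adj a b
    simp only [Equiv.coe_fn_mk]
    rw [← cycle_restrict_adj, Fin.castSucc_castPred, Fin.castSucc_castPred,
      restr_adj]
    exact f.map_adj_iff

/-- The extension of a permutation of `Fin (m+2)` to `Fin (m+3)` fixing the last element. -/
def ext2 (q : Fin (m+2) ≃ Fin (m+2)) : Fin (m+3) ≃ Fin (m+3) :=
  (finSuccEquivLast).trans ((Equiv.optionCongr q).trans finSuccEquivLast.symm)

lemma ext2_castSucc (q : Fin (m+2) ≃ Fin (m+2)) (i : Fin (m+2)) :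
    ext2 q i.castSucc = (q i).castSucc := by
  simp [ext2]

lemma ext2_last (q : Fin (m+2) ≃ Fin (m+2)) :
    ext2 q (Fin.last (m+2)) = Fin.last (m+2) := by
  simp [ext2]

end LikelihoodAux

open LikelihoodAux SimpleGraph Fin in
theorem likelihood_cycleGraph (n : ℕ) (hn : 3 ≤ n) :
    likelihood (SimpleGraph.cycleGraph n) =
      likelihood (SimpleGraph.pathGraph (n - 1)) / ((n : ℝ) * ((n - 1).choose 2 : ℝ)) := by
  classical
  obtain ⟨m, rfl⟩ : ∃ m, n = m + 3 := ⟨n - 3, by omega⟩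
  have hm1 : m + 3 - 1 = m + 2 := rfl
  rw [hm1]
  rw [likelihood, likelihood]
  rw [Finset.sum_bij (i := fun (G : SimpleGraph (Fin (m+3))) (_ : G ∈
        Finset.univ.filter (fun G' => Nonempty (G' ≃g cycleGraph (m+3)))) => restr G)
      (t := Finset.univ.filter (fun H : SimpleGraph (Fin (m+2)) =>
        Nonempty (H ≃g pathGraph (m+2))))
      (g := fun H => (1 / (((m:ℝ)+3) * ((m+2).choose 2 : ℝ))) *
        (1 / (((m+2).factorial : ℝ) * ∏ i : Fin (m+2), ((i : ℕ).choose (dBelow H i) : ℝ))))]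
  · -- final algebra
    rw [← Finset.mul_sum]
    push_cast
    ring
  · -- maps into target
    intro G hG
    simp only [Finset.mem_filter, Finset.mem_univ, true_and] at hG ⊢
    exact restr_iso_path G hG.some
  · -- injectivity
    intro G1 h1 G2 h2 hr
    simp only [Finset.mem_filter, Finset.mem_univ, true_and] at h1 h2
    ext a b
    induction a using Fin.lastCases with
    | last =>
      induction b using Fin.lastCases with
      | last => simp
      | cast v =>
        rw [adj_top_iff G1 h1.some v, adj_top_iff G2 h2.some v, hr]
    | cast u =>
      induction b using Fin.lastCases with
      | last =>
        rw [SimpleGraph.adj_comm, SimpleGraph.adj_comm G2,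
          adj_top_iff G1 h1.some u, adj_top_iff G2 h2.some u, hr]
      | cast v =>
        rw [← restr_adj, ← restr_adj, hr]
  · -- surjectivity
    intro H hH
    simp only [Finset.mem_filter, Finset.mem_univ, true_and] at hH
    obtain ⟨e⟩ := hH
    refine ⟨(cycleGraph (m+3)).comap (ext2 e.toEquiv), by
      simp only [Finset.mem_filter, Finset.mem_univ, true_and]
      exact ⟨SimpleGraph.Iso.comap (ext2 e.toEquiv) (cycleGraph (m+3))⟩, ?_⟩
    ext i j
    rw [restr_adj]
    show (cycleGraph (m+3)).Adj (ext2 e.toEquiv i.castSucc) (ext2 e.toEquiv j.castSucc)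
      ↔ H.Adj i j
    rw [ext2_castSucc, ext2_castSucc, cycle_restrict_adj]
    exact e.map_adj_iff
  · -- value equality
    intro G hG
    simp only [Finset.mem_filter, Finset.mem_univ, true_and] at hG
    rw [Fin.prod_univ_castSucc
      (f := fun i : Fin (m+3) => ((i : ℕ).choose (dBelow G i) : ℝ))]
    have h1 : ((Fin.last (m+2) : Fin (m+3)) : ℕ) = m + 2 := rfl
    rw [h1, dBelow_last G hG.some]
    have h2 : ∀ i : Fin (m+2), (((i.castSucc : Fin (m+3)) : ℕ).choose
        (dBelow G i.castSucc) : ℝ) = ((i : ℕ).choose (dBelow (restr G) i) : ℝ) := by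
      intro i
      rw [dBelow_castSucc, Fin.coe_castSucc]
    simp only [h2]
    rw [show (m+3).factorial = (m+3) * (m+2).factorial from rfl]
    push_cast
    rw [one_div, one_div, one_div, mul_inv, mul_inv, mul_inv, mul_inv]
    ring
end

section
/- For every simple graph G, the likelihood of G equals the likelihood of its complement: L(G) = L(Ḡ). -/
open Finset

/-- An isomorphism between graphs induces one between complements. -/
def isoCompl {V W : Type*} {A : SimpleGraph V} {B : SimpleGraph W} (f : A ≃g B) :
    Aᶜ ≃g Bᶜ where
  toEquiv := f.toEquiv
  map_rel_iff' := by
    intro a b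
    simp only [SimpleGraph.compl_adj, ne_eq, EmbeddingLike.apply_eq_iff_eq]
    rw [show f.toEquiv a = f a from rfl, show f.toEquiv b = f b from rfl, f.map_adj_iff]

lemma dBelow_le {t : ℕ} (G' : SimpleGraph (Fin t)) (i : Fin t) :
    dBelow G' i ≤ (i : ℕ) := by
  have h : {j | G'.Adj i j ∧ j < i} ⊆ Set.Iio i := fun j hj => hj.2
  calc dBelow G' i ≤ Set.ncard (Set.Iio i) :=
        Set.ncard_le_ncard h (Set.toFinite _)
    _ = (i : ℕ) := by
        rw [← Finset.coe_Iio, Set.ncard_coe_finset, Fin.card_Iio]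

lemma dBelow_compl {t : ℕ} (G' : SimpleGraph (Fin t)) (i : Fin t) :
    dBelow G'ᶜ i = (i : ℕ) - dBelow G' i := by
  have hset : {j | G'ᶜ.Adj i j ∧ j < i} = Set.Iio i \ {j | G'.Adj i j ∧ j < i} := by
    ext j
    simp only [Set.mem_setOf_eq, SimpleGraph.compl_adj, Set.mem_diff, Set.mem_Iio]
    constructor
    · rintro ⟨⟨_, hna⟩, hlt⟩
      exact ⟨hlt, fun h => hna h.1⟩
    · rintro ⟨hlt, hn⟩
      exact ⟨⟨fun h => (h ▸ hlt).false, fun ha => hn ⟨ha, hlt⟩⟩, hlt⟩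
  rw [dBelow, hset, Set.ncard_diff (fun j hj => hj.2) (Set.toFinite _)]
  congr 1
  rw [← Finset.coe_Iio, Set.ncard_coe_finset, Fin.card_Iio]

theorem likelihood_compl {t : ℕ} (G : SimpleGraph (Fin t)) :
    likelihood G = likelihood Gᶜ := by
  classical
  unfold likelihood
  refine Finset.sum_nbij' (fun G' => G'ᶜ) (fun G' => G'ᶜ) ?_ ?_ ?_ ?_ ?_
  · intro G' hG'
    simp only [Finset.mem_filter, Finset.mem_univ, true_and] at hG' ⊢
    exact ⟨isoCompl hG'.some⟩
  · intro G' hG'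
    simp only [Finset.mem_filter, Finset.mem_univ, true_and] at hG' ⊢
    have := isoCompl hG'.some
    rw [compl_compl] at this
    exact ⟨this⟩
  · intro G' _; exact compl_compl G'
  · intro G' _; exact compl_compl G'
  · intro G' _
    congr 2
    apply Finset.prod_congr rfl
    intro i _
    rw [dBelow_compl, Nat.choose_symm (dBelow_le G' i)]
end

section
/- Let G be a simple graph on t vertices whose edge set consists of exactly s pairwise disjoint edges (a matching of size s, so the edges are incident with 2s distinct vertices, 2s ≤ t). Then L(G) = (1/t!) · Σ_{2 ≤ i_1 < i_2 < ⋯ < i_s ≤ t} ∏_{j=1}^{s} (i_j + 1 − 2j)/(i_j − 1). -/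
open Finset

def Cfg {t : ℕ} (p : Finset (Fin t × Fin t)) : Prop :=
  (∀ x ∈ p, x.2 < x.1) ∧
  ∀ x ∈ p, ∀ y ∈ p, x ≠ y → x.1 ≠ y.1 ∧ x.1 ≠ y.2 ∧ x.2 ≠ y.1 ∧ x.2 ≠ y.2
open Classical in
noncomputable def pOf {t : ℕ} (M : SimpleGraph (Fin t)) : Finset (Fin t × Fin t) :=
  univ.filter (fun x => M.Adj x.1 x.2 ∧ x.2 < x.1)
def graphOfC {t : ℕ} (p : Finset (Fin t × Fin t)) : SimpleGraph (Fin t) :=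
  SimpleGraph.fromRel (fun u v => (u, v) ∈ p)
variable {t : ℕ}
lemma mem_pOf {M : SimpleGraph (Fin t)} {x : Fin t × Fin t} :
    x ∈ pOf M ↔ M.Adj x.1 x.2 ∧ x.2 < x.1 := by
  classical
  simp [pOf]

lemma subsingleton_nbr {M : SimpleGraph (Fin t)} (hdeg : ∀ v, (M.neighborSet v).ncard ≤ 1)
    {v u w : Fin t} (hu : M.Adj v u) (hw : M.Adj v w) : u = w := by
  have := (Set.ncard_le_one (Set.toFinite _)).mp (hdeg v)
  exact this u hu w hw

lemma cfg_pOf {M : SimpleGraph (Fin t)} (hdeg : ∀ v, (M.neighborSet v).ncard ≤ 1) :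
    Cfg (pOf M) := by
  constructor
  · exact fun x hx => (mem_pOf.mp hx).2
  · intro x hx y hy hne
    obtain ⟨hax, hlx⟩ := mem_pOf.mp hx
    obtain ⟨hay, hly⟩ := mem_pOf.mp hy
    refine ⟨?_, ?_, ?_, ?_⟩
    · intro h
      apply hne
      have := subsingleton_nbr hdeg (h ▸ hax) hay
      exact Prod.ext h this
    · intro h
      have h2 : M.Adj x.1 y.1 := by rw [h]; exact hay.symm
      have h3 : x.2 = y.1 := subsingleton_nbr hdeg hax h2
      have : x.2 < x.2 := by
        calc x.2 < x.1 := hlx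
        _ = y.2 := h
        _ < y.1 := hly
        _ = x.2 := h3.symm
      exact absurd this (lt_irrefl _)
    · intro h
      have h2 : M.Adj x.2 y.2 := by rw [h]; exact hay
      have h3 : x.1 = y.2 := subsingleton_nbr hdeg hax.symm h2
      have : x.2 < x.2 := by
        calc x.2 < x.1 := hlx
        _ = y.2 := h3
        _ < y.1 := hly
        _ = x.2 := h.symm
      exact absurd this (lt_irrefl _)
    · intro h
      have h2 : M.Adj x.2 y.1 := by rw [h]; exact hay.symm
      have h3 : x.1 = y.1 := subsingleton_nbr hdeg hax.symm h2
      apply hne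
      exact Prod.ext h3 h

lemma graphOf_pOf (M : SimpleGraph (Fin t)) : graphOfC (pOf M) = M := by
  ext u v
  simp only [graphOfC, SimpleGraph.fromRel_adj, mem_pOf]
  constructor
  · rintro ⟨hne, ⟨h, _⟩ | ⟨h, _⟩⟩
    · exact h
    · exact h.symm
  · intro h
    refine ⟨h.ne, ?_⟩
    rcases lt_or_gt_of_ne h.ne with hlt | hlt
    · exact Or.inr ⟨h.symm, hlt⟩
    · exact Or.inl ⟨h, hlt⟩

lemma pOf_graphOf {p : Finset (Fin t × Fin t)} (hp : Cfg p) : pOf (graphOfC p) = p := by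
  ext x
  simp only [mem_pOf, graphOfC, SimpleGraph.fromRel_adj]
  constructor
  · rintro ⟨⟨hne, h | h⟩, hlt⟩
    · exact h
    · exact absurd (hp.1 _ h) (by simp only [not_lt]; exact hlt.le)
  · intro hx
    have hlt := hp.1 x hx
    exact ⟨⟨hlt.ne', Or.inl hx⟩, hlt⟩

lemma deg_graphOf {p : Finset (Fin t × Fin t)} (hp : Cfg p) (v : Fin t) :
    ((graphOfC p).neighborSet v).ncard ≤ 1 := by
  rw [Set.ncard_le_one (Set.toFinite _)]
  rintro u hu w hw
  simp only [SimpleGraph.mem_neighborSet, graphOfC, SimpleGraph.fromRel_adj] at hu hw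
  obtain ⟨_, hu | hu⟩ := hu <;> obtain ⟨_, hw | hw⟩ := hw
  · by_contra hne
    have hxy : ((v,u) : Fin t × Fin t) ≠ (v,w) := by simp [hne]
    exact (hp.2 _ hu _ hw hxy).1 rfl
  · by_cases he : ((v,u) : Fin t × Fin t) = (w,v)
    · rw [Prod.mk.injEq] at he
      exact he.2.trans he.1
    · exact absurd rfl (hp.2 _ hu _ hw he).2.1
  · by_cases he : ((u,v) : Fin t × Fin t) = (v,w)
    · rw [Prod.mk.injEq] at he
      exact he.1.trans he.2
    · exact absurd rfl (hp.2 _ hu _ hw he).2.2.1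
  · by_contra hne
    have hxy : ((u,v) : Fin t × Fin t) ≠ (w,v) := by simp [hne]
    exact (hp.2 _ hu _ hw hxy).2.2.2 rfl

lemma card_pOf {M : SimpleGraph (Fin t)} : (pOf M).card = M.edgeSet.ncard := by
  classical
  rw [Set.ncard_eq_toFinset_card', ← SimpleGraph.edgeFinset]
  apply Finset.card_bij (fun x _ => Sym2.mk x.1 x.2)
  · intro x hx
    rw [SimpleGraph.mem_edgeFinset]
    exact (mem_pOf.mp hx).1
  · intro x hx y hy hxy
    obtain ⟨_, hlx⟩ := mem_pOf.mp hx
    obtain ⟨_, hly⟩ := mem_pOf.mp hy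
    rw [Sym2.mk_eq_mk_iff] at hxy
    rcases hxy with h | h
    · exact h
    · -- swapped
      have h1 : x.1 = y.2 := (Prod.ext_iff.mp h).1
      have h2 : x.2 = y.1 := (Prod.ext_iff.mp h).2
      exfalso
      rw [h1, h2] at hlx
      exact absurd (hly.trans hlx) (lt_irrefl _)
  · intro e he
    rw [SimpleGraph.mem_edgeFinset] at he
    induction e with
    | _ u v =>
      rcases lt_or_gt_of_ne ((SimpleGraph.mem_edgeSet M).mp he).ne with hlt | hlt
      · refine ⟨(v, u), mem_pOf.mpr ⟨?_, hlt⟩, ?_⟩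
        · exact ((SimpleGraph.mem_edgeSet M).mp he).symm
        · simp [Sym2.eq_swap]
      · exact ⟨(u, v), mem_pOf.mpr ⟨(SimpleGraph.mem_edgeSet M).mp he, hlt⟩, rfl⟩

lemma disj_images {p : Finset (Fin t × Fin t)} (hp : Cfg p) :
    Disjoint (p.image Prod.fst) (p.image Prod.snd) := by
  classical
  rw [Finset.disjoint_left]
  intro v hv1 hv2
  obtain ⟨x, hx, hxv⟩ := Finset.mem_image.mp hv1
  obtain ⟨y, hy, hyv⟩ := Finset.mem_image.mp hv2
  by_cases he : x = y
  · subst he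
    exact absurd (hxv.trans hyv.symm) (hp.1 x hx).ne'
  · exact (hp.2 x hx y hy he).2.1 (hxv.trans hyv.symm)

lemma dBelow_eq {M : SimpleGraph (Fin t)} (hdeg : ∀ v, (M.neighborSet v).ncard ≤ 1)
    (i : Fin t) :
    dBelow M i = if i ∈ (pOf M).image Prod.fst then 1 else 0 := by
  classical
  by_cases h : i ∈ (pOf M).image Prod.fst
  · rw [if_pos h]
    obtain ⟨x, hx, hxi⟩ := Finset.mem_image.mp h
    obtain ⟨hax, hlx⟩ := mem_pOf.mp hx
    have : {j | M.Adj i j ∧ j < i} = {x.2} := by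
      ext j
      simp only [Set.mem_setOf_eq, Set.mem_singleton_iff]
      constructor
      · rintro ⟨haj, _⟩
        exact subsingleton_nbr hdeg haj (hxi ▸ hax)
      · rintro rfl
        exact ⟨hxi ▸ hax, hxi ▸ hlx⟩
    rw [dBelow, this, Set.ncard_singleton]
  · rw [if_neg h]
    have : {j | M.Adj i j ∧ j < i} = ∅ := by
      ext j
      simp only [Set.mem_setOf_eq, Set.mem_empty_iff_false, iff_false, not_and]
      intro haj hji
      exact h (Finset.mem_image.mpr ⟨(i, j), mem_pOf.mpr ⟨haj, hji⟩, rfl⟩)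
    rw [dBelow, this, Set.ncard_empty]

lemma choose_prod {M : SimpleGraph (Fin t)} (hdeg : ∀ v, (M.neighborSet v).ncard ≤ 1) :
    ∏ i : Fin t, ((i : ℕ).choose (dBelow M i) : ℝ) = ∏ x ∈ pOf M, ((x.1 : ℕ) : ℝ) := by
  classical
  have h1 : ∀ i : Fin t, ((i : ℕ).choose (dBelow M i) : ℝ) =
      if i ∈ (pOf M).image Prod.fst then ((i : ℕ) : ℝ) else 1 := by
    intro i
    rw [dBelow_eq hdeg]
    by_cases h : i ∈ (pOf M).image Prod.fst <;> simp [h]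
  rw [Finset.prod_congr rfl (fun i _ => h1 i), Finset.prod_ite_mem, Finset.univ_inter]
  exact Finset.prod_image (fun x hx y hy hxy => by
    by_contra hne
    exact (cfg_pOf hdeg).2 x hx y hy hne |>.1 hxy)

lemma prod_range_getD {α : Type*} (l : List α) (f : α → ℝ) (d : α) :
    ∏ j ∈ range l.length, f (l.getD j d) = (l.map f).prod := by
  induction l with
  | nil => simp
  | cons x xs ih =>
      rw [List.length_cons, Finset.prod_range_succ']
      simp only [List.getD_cons_succ, List.getD_cons_zero, ih, List.map_cons, List.prod_cons]
      ring

lemma sort_insert_max {a : Fin t} {A : Finset (Fin t)} (ha : ∀ x ∈ A, x < a) :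
    (insert a A).sort (· ≤ ·) = A.sort (· ≤ ·) ++ [a] := by
  classical
  have hna : a ∉ A := fun h => absurd (ha a h) (lt_irrefl _)
  refine (fun hp h1 h2 => List.Perm.eq_of_pairwise' h1 h2 hp) ?_ (Finset.pairwise_sort _ _) ?_
  · rw [← Multiset.coe_eq_coe, Finset.sort_eq, Finset.insert_val,
      Multiset.ndinsert_of_notMem hna]
    have h2 : ((A.sort (· ≤ ·) ++ [a] : List (Fin t)) : Multiset (Fin t))
        = ((A.sort (· ≤ ·) : List (Fin t)) : Multiset (Fin t)) + (([a] : List (Fin t)) : Multiset (Fin t)) := by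
      rw [← Multiset.coe_add]
    rw [h2, Finset.sort_eq, Multiset.coe_singleton, add_comm, Multiset.singleton_add]
  · refine List.pairwise_append.mpr ⟨Finset.pairwise_sort _ _, List.pairwise_singleton _ a, ?_⟩
    intro x hx y hy
    rw [List.mem_singleton] at hy
    subst hy
    exact (ha x ((Finset.mem_sort _).mp hx)).le

lemma sort_image_shift (A : Finset (Fin t)) :
    ((A.image fun v : Fin t => (v : ℕ) + 1).sort (· ≤ ·)) =
      (A.sort (· ≤ ·)).map (fun v : Fin t => (v : ℕ) + 1) := by
  classical
  have hinj : Function.Injective (fun v : Fin t => (v : ℕ) + 1) := by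
    intro x y h
    simp only [add_left_inj] at h
    exact Fin.val_injective h
  refine (fun hp h1 h2 => List.Perm.eq_of_pairwise' h1 h2 hp) ?_ (Finset.pairwise_sort _ _) ?_
  · rw [← Multiset.coe_eq_coe, Finset.sort_eq, ← Multiset.map_coe, Finset.sort_eq]
    rw [Finset.image_val_of_injOn (hinj.injOn)]
  · have hmono : ∀ x y : Fin t, x ≤ y → (x : ℕ) + 1 ≤ (y : ℕ) + 1 := by
      intro x y h
      have := Fin.le_def.mp h
      omega
    exact List.Pairwise.map _ (fun x y h => hmono x y h) (Finset.pairwise_sort _ _)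

instance {t : ℕ} (p : Finset (Fin t × Fin t)) : Decidable (Cfg p) := by
  unfold Cfg; infer_instance

def NN {t : ℕ} (A : Finset (Fin t)) : ℕ :=
  (univ.filter (fun p : Finset (Fin t × Fin t) => Cfg p ∧ p.image Prod.fst = A)).card

variable {t : ℕ}

lemma card_image_fst {p : Finset (Fin t × Fin t)} (hp : Cfg p) :
    (p.image Prod.fst).card = p.card := by
  classical
  exact Finset.card_image_of_injOn (fun x hx y hy hxy => by
    by_contra hne
    exact (hp.2 x hx y hy hne).1 hxy)

lemma card_image_snd {p : Finset (Fin t × Fin t)} (hp : Cfg p) :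
    (p.image Prod.snd).card = p.card := by
  classical
  exact Finset.card_image_of_injOn (fun x hx y hy hxy => by
    by_contra hne
    exact (hp.2 x hx y hy hne).2.2.2 hxy)

lemma disj_images' {p : Finset (Fin t × Fin t)} (hp : Cfg p) :
    Disjoint (p.image Prod.fst) (p.image Prod.snd) := by
  classical
  rw [Finset.disjoint_left]
  intro v hv1 hv2
  obtain ⟨x, hx, hxv⟩ := Finset.mem_image.mp hv1
  obtain ⟨y, hy, hyv⟩ := Finset.mem_image.mp hv2
  by_cases he : x = y
  · subst he
    exact absurd (hxv.trans hyv.symm) (hp.1 x hx).ne'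
  · exact (hp.2 x hx y hy he).2.1 (hxv.trans hyv.symm)

lemma union_sub_Iio {a : Fin t} {A : Finset (Fin t)} (ha : ∀ x ∈ A, x < a)
    {q : Finset (Fin t × Fin t)} (hq : Cfg q) (hqA : q.image Prod.fst = A) :
    A ∪ q.image Prod.snd ⊆ Iio a := by
  intro v hv
  rw [Finset.mem_union] at hv
  rw [Finset.mem_Iio]
  rcases hv with hv | hv
  · exact ha v hv
  · obtain ⟨y, hy, hyv⟩ := Finset.mem_image.mp hv
    have h1 : y.1 ∈ A := hqA ▸ Finset.mem_image.mpr ⟨y, hy, rfl⟩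
    exact hyv ▸ (hq.1 y hy).trans (ha _ h1)

lemma card_union_eq {A : Finset (Fin t)} 
    {q : Finset (Fin t × Fin t)} (hq : Cfg q) (hqA : q.image Prod.fst = A) :
    (A ∪ q.image Prod.snd).card = 2 * A.card := by
  classical
  rw [Finset.card_union_of_disjoint (hqA ▸ disj_images' hq), card_image_snd hq,
    ← hqA, card_image_fst hq]
  ring

lemma NN_rec {a : Fin t} {A : Finset (Fin t)} (ha : ∀ x ∈ A, x < a) :
    NN (insert a A) = ((a : ℕ) - 2 * A.card) * NN A := by
  classical
  have hna : a ∉ A := fun h => absurd (ha a h) (lt_irrefl _)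
  have key : (univ.filter (fun p : Finset (Fin t × Fin t) =>
        Cfg p ∧ p.image Prod.fst = insert a A))
      = (univ.filter (fun q : Finset (Fin t × Fin t) =>
          Cfg q ∧ q.image Prod.fst = A)).biUnion
          (fun q => (Iio a \ (A ∪ q.image Prod.snd)).image (fun b => insert (a, b) q)) := by
    ext p
    simp only [Finset.mem_biUnion, Finset.mem_filter, Finset.mem_univ, true_and,
      Finset.mem_image, Finset.mem_sdiff, Finset.mem_Iio, Finset.mem_union, not_or]
    constructor
    · rintro ⟨hcfg, himg⟩
      have hma : a ∈ p.image Prod.fst := himg ▸ Finset.mem_insert_self a A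
      obtain ⟨x, hx, hxa⟩ := Finset.mem_image.mp hma
      have hAsub : ∀ v ∈ A, ∃ y ∈ p, y ≠ x ∧ y.1 = v := by
        intro v hv
        have : v ∈ p.image Prod.fst := himg ▸ Finset.mem_insert_of_mem hv
        obtain ⟨y, hy, hyv⟩ := Finset.mem_image.mp this
        refine ⟨y, hy, ?_, hyv⟩
        rintro rfl
        rw [hxa] at hyv
        exact hna (hyv ▸ hv)
      refine ⟨p.erase x, ⟨⟨fun y hy => hcfg.1 y (Finset.mem_of_mem_erase hy),
        fun y hy z hz => hcfg.2 y (Finset.mem_of_mem_erase hy) z (Finset.mem_of_mem_erase hz)⟩,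
        ?_⟩, x.2, ⟨?_, ?_, ?_⟩, ?_⟩
      · -- image fst (erase) = A
        ext v
        simp only [Finset.mem_image, Finset.mem_erase]
        constructor
        · rintro ⟨y, ⟨hne, hy⟩, rfl⟩
          have : y.1 ∈ insert a A := himg ▸ Finset.mem_image.mpr ⟨y, hy, rfl⟩
          rcases Finset.mem_insert.mp this with h | h
          · exact absurd (h.trans hxa.symm) (hcfg.2 y hy x hx hne).1
          · exact h
        · intro hv
          obtain ⟨y, hy, hne, hyv⟩ := hAsub v hv
          exact ⟨y, ⟨hne, hy⟩, hyv⟩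
      · exact hxa ▸ hcfg.1 x hx
      · -- x.2 ∉ A
        intro hv
        obtain ⟨y, hy, hne, hyv⟩ := hAsub x.2 hv
        exact (hcfg.2 x hx y hy (Ne.symm hne)).2.2.1 hyv.symm
      · -- x.2 ∉ image snd (erase)
        intro hv
        obtain ⟨y, hy, hyv⟩ := hv
        have hne : x ≠ y := fun h => (Finset.mem_erase.mp hy).1 h.symm
        exact (hcfg.2 x hx y (Finset.mem_of_mem_erase hy) hne).2.2.2 hyv.symm
      · rw [show ((a, x.2) : Fin t × Fin t) = x from Prod.ext hxa.symm rfl,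
          Finset.insert_erase hx]
    · rintro ⟨q, ⟨⟨hq1, hq2⟩, hqA⟩, b, ⟨hba, hbA, hbs⟩, rfl⟩
      have htop : ∀ y ∈ q, y.1 ∈ A := fun y hy => hqA ▸ Finset.mem_image.mpr ⟨y, hy, rfl⟩
      have hab : ((a, b) : Fin t × Fin t) ∉ q := fun h => hna (htop _ h)
      have hclause : ∀ y ∈ q, a ≠ y.1 ∧ a ≠ y.2 ∧ b ≠ y.1 ∧ b ≠ y.2 := by
        intro y hy
        refine ⟨(ha _ (htop y hy)).ne', ((hq1 y hy).trans (ha _ (htop y hy))).ne', ?_, ?_⟩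
        · exact fun h => hbA (h ▸ htop y hy)
        · exact fun h => hbs ⟨y, hy, h.symm⟩
      refine ⟨⟨?_, ?_⟩, ?_⟩
      · intro x hxm
        rcases Finset.mem_insert.mp hxm with rfl | hxm
        · exact hba
        · exact hq1 x hxm
      · intro x hxm y hym hne
        rcases Finset.mem_insert.mp hxm with rfl | hxm <;>
          rcases Finset.mem_insert.mp hym with h | hym
        · exact absurd h.symm hne
        · exact hclause y hym
        · subst h
          obtain ⟨c1, c2, c3, c4⟩ := hclause x hxm
          exact ⟨c1.symm, c3.symm, c2.symm, c4.symm⟩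
        · exact hq2 x hxm y hym hne
      · rw [Finset.image_insert, hqA]
  have hdisj : ∀ q ∈ univ.filter (fun q : Finset (Fin t × Fin t) =>
      Cfg q ∧ q.image Prod.fst = A), ∀ q' ∈ univ.filter (fun q : Finset (Fin t × Fin t) =>
      Cfg q ∧ q.image Prod.fst = A), q ≠ q' →
      Disjoint ((Iio a \ (A ∪ q.image Prod.snd)).image (fun b => insert (a, b) q))
        ((Iio a \ (A ∪ q'.image Prod.snd)).image (fun b => insert (a, b) q')) := by
    intro q hq q' hq' hne
    rw [Finset.mem_filter] at hq hq'
    rw [Finset.disjoint_left]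
    intro p hp hp'
    obtain ⟨b, hb, rfl⟩ := Finset.mem_image.mp hp
    obtain ⟨b', hb', he⟩ := Finset.mem_image.mp hp'
    apply hne
    have hab : ((a, b) : Fin t × Fin t) ∉ q := fun h =>
      hna (hq.2.2 ▸ Finset.mem_image.mpr ⟨_, h, rfl⟩)
    have hab' : ((a, b') : Fin t × Fin t) ∉ q' := fun h =>
      hna (hq'.2.2 ▸ Finset.mem_image.mpr ⟨_, h, rfl⟩)
    have hbb : b' = b := by
      have h3 : ((a, b') : Fin t × Fin t) ∈ insert ((a, b) : Fin t × Fin t) q := by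
        rw [show insert ((a, b) : Fin t × Fin t) q = insert ((a, b') : Fin t × Fin t) q' from he.symm]
        exact Finset.mem_insert_self _ _
      rcases Finset.mem_insert.mp h3 with h | h
      · exact congrArg Prod.snd h
      · exact (hna (hq.2.2 ▸ Finset.mem_image.mpr ⟨_, h, rfl⟩)).elim
    subst hbb
    rw [← Finset.erase_insert hab, ← he, Finset.erase_insert hab']
  have hterm : ∀ q ∈ univ.filter (fun q : Finset (Fin t × Fin t) =>
      Cfg q ∧ q.image Prod.fst = A),
      ((Iio a \ (A ∪ q.image Prod.snd)).image (fun b => insert (a, b) q)).card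
        = (a : ℕ) - 2 * A.card := by
    intro q hq
    rw [Finset.mem_filter] at hq
    obtain ⟨_, hqc, hqA⟩ := hq
    have hinj : Set.InjOn (fun b => insert ((a, b) : Fin t × Fin t) q)
        ↑(Iio a \ (A ∪ q.image Prod.snd)) := by
      intro b hb b' hb' hbb
      have h3 : ((a, b) : Fin t × Fin t) ∈ insert ((a, b') : Fin t × Fin t) q := by
        rw [show insert ((a, b') : Fin t × Fin t) q = insert ((a, b) : Fin t × Fin t) q
          from hbb.symm]
        exact Finset.mem_insert_self _ _
      rcases Finset.mem_insert.mp h3 with h | h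
      · exact congrArg Prod.snd h
      · exact (hna (hqA ▸ Finset.mem_image.mpr ⟨_, h, rfl⟩)).elim
    rw [Finset.card_image_of_injOn hinj,
      Finset.card_sdiff_of_subset (union_sub_Iio ha hqc hqA),
      Fin.card_Iio, card_union_eq hqc hqA]
  rw [NN, NN, key, Finset.card_biUnion hdisj, Finset.sum_congr rfl hterm,
    Finset.sum_const, smul_eq_mul, mul_comm]

lemma NN_zero' {a : Fin t} {A : Finset (Fin t)} (ha : ∀ x ∈ A, x < a)
    (h : (a : ℕ) < 2 * A.card) : NN A = 0 := by
  classical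
  rw [NN, Finset.card_eq_zero, Finset.filter_eq_empty_iff]
  rintro q _
  rintro ⟨hqc, hqA⟩
  have h1 := Finset.card_le_card (union_sub_Iio ha hqc hqA)
  rw [card_union_eq hqc hqA, Fin.card_Iio] at h1
  omega

lemma NN_empty : NN (∅ : Finset (Fin t)) = 1 := by
  classical
  rw [NN]
  have : (univ.filter (fun p : Finset (Fin t × Fin t) =>
      Cfg p ∧ p.image Prod.fst = ∅)) = {∅} := by
    ext p
    simp only [Finset.mem_filter, Finset.mem_univ, true_and, Finset.mem_singleton,
      Finset.image_eq_empty]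
    constructor
    · rintro ⟨_, h⟩; exact h
    · rintro rfl
      exact ⟨⟨fun x hx => absurd hx (Finset.notMem_empty x),
        fun x hx => absurd hx (Finset.notMem_empty x)⟩, rfl⟩
  rw [this, Finset.card_singleton]

lemma master (A : Finset (Fin t)) :
    (NN A : ℝ) = ∏ j ∈ range A.card,
      ((((A.sort (· ≤ ·)).map Fin.val).getD j 0 : ℝ) - 2 * (j : ℝ)) := by
  induction A using Finset.induction_on_max with
  | empty => simp [NN_empty]
  | insert a A ha ih =>
    have hna : a ∉ A := fun h => absurd (ha a h) (lt_irrefl _)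
    have hlen : ((A.sort (· ≤ ·)).map Fin.val).length = A.card := by
      rw [List.length_map, Finset.length_sort]
    have hsort : (((insert a A).sort (· ≤ ·)).map Fin.val)
        = ((A.sort (· ≤ ·)).map Fin.val) ++ [(a : ℕ)] := by
      rw [sort_insert_max ha, List.map_append, List.map_singleton]
    have hgetD1 : ∀ j ∈ range A.card,
        ((((insert a A).sort (· ≤ ·)).map Fin.val).getD j 0 : ℝ) - 2 * (j : ℝ)
          = (((A.sort (· ≤ ·)).map Fin.val).getD j 0 : ℝ) - 2 * (j : ℝ) := by
      intro j hj
      rw [hsort, List.getD_append _ _ _ _ (by rw [hlen]; exact mem_range.mp hj)]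
    have hgetD2 : (((insert a A).sort (· ≤ ·)).map Fin.val).getD A.card 0 = (a : ℕ) := by
      rw [hsort, List.getD_append_right _ _ _ _ (by rw [hlen]), hlen]
      simp
    rw [NN_rec ha, Finset.card_insert_of_notMem hna, Finset.prod_range_succ,
      Finset.prod_congr rfl hgetD1, hgetD2, ← ih]
    by_cases hle : 2 * A.card ≤ (a : ℕ)
    · rw [Nat.cast_mul, Nat.cast_sub hle]
      push_cast
      ring
    · rw [NN_zero' ha (Nat.lt_of_not_le hle), Nat.sub_eq_zero_of_le (Nat.le_of_not_le hle)]
      push_cast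
      ring

def Tset {t : ℕ} (p : Finset (Fin t × Fin t)) : Finset (Fin t) :=
  p.biUnion (fun x => ({x.1, x.2} : Finset (Fin t)))

lemma mem_Tset_fst {p : Finset (Fin t × Fin t)} {x : Fin t × Fin t} (hx : x ∈ p) :
    x.1 ∈ Tset p := Finset.mem_biUnion.mpr ⟨x, hx, by simp⟩

lemma mem_Tset_snd {p : Finset (Fin t × Fin t)} {x : Fin t × Fin t} (hx : x ∈ p) :
    x.2 ∈ Tset p := Finset.mem_biUnion.mpr ⟨x, hx, by simp⟩

def phi {t : ℕ} (p : Finset (Fin t × Fin t)) (z : ↥p × Bool) : {v : Fin t // v ∈ Tset p} :=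
  ⟨cond z.2 z.1.1.1 z.1.1.2, by
    cases hz : z.2
    · simpa [hz] using mem_Tset_snd z.1.2
    · simpa [hz] using mem_Tset_fst z.1.2⟩

lemma Tset_eq_union {p : Finset (Fin t × Fin t)} :
    Tset p = p.image Prod.fst ∪ p.image Prod.snd := by
  ext v
  simp only [Tset, Finset.mem_biUnion, Finset.mem_union, Finset.mem_image,
    Finset.mem_insert, Finset.mem_singleton]
  constructor
  · rintro ⟨x, hx, h | h⟩
    · exact Or.inl ⟨x, hx, h.symm⟩
    · exact Or.inr ⟨x, hx, h.symm⟩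
  · rintro (⟨x, hx, h⟩ | ⟨x, hx, h⟩)
    · exact ⟨x, hx, Or.inl h.symm⟩
    · exact ⟨x, hx, Or.inr h.symm⟩

lemma card_Tset {p : Finset (Fin t × Fin t)} (hp : Cfg p) :
    (Tset p).card = 2 * p.card := by
  classical
  rw [Tset_eq_union, Finset.card_union_of_disjoint (disj_images' hp),
    card_image_fst hp, card_image_snd hp]
  ring

lemma phi_bijective {p : Finset (Fin t × Fin t)} (hp : Cfg p) :
    Function.Bijective (phi p) := by
  constructor
  · rintro ⟨⟨x, hx⟩, b⟩ ⟨⟨y, hy⟩, c⟩ h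
    have hval := congrArg Subtype.val h
    cases b <;> cases c <;> simp only [phi, cond_true, cond_false] at hval
    · -- snd = snd
      by_cases he : x = y
      · subst he; rfl
      · exact absurd hval (hp.2 x hx y hy he).2.2.2
    · -- snd = fst
      by_cases he : x = y
      · subst he; exact absurd hval.symm (hp.1 x hx).ne'
      · exact absurd hval.symm (hp.2 y hy x hx (Ne.symm he)).2.1
    · by_cases he : x = y
      · subst he; exact absurd hval (hp.1 x hx).ne'
      · exact absurd hval (hp.2 x hx y hy he).2.1
    · by_cases he : x = y
      · subst he; rfl
      · exact absurd hval (hp.2 x hx y hy he).1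
  · rintro ⟨v, hv⟩
    obtain ⟨x, hx, hvm⟩ := Finset.mem_biUnion.mp hv
    rcases Finset.mem_insert.mp hvm with h | h
    · exact ⟨(⟨x, hx⟩, true), by simp [phi, h.symm]⟩
    · exact ⟨(⟨x, hx⟩, false), by
        simp only [Finset.mem_singleton] at h
        simp [phi, h.symm]⟩

lemma iso_of_cfg {p₁ p₂ : Finset (Fin t × Fin t)} (h₁ : Cfg p₁) (h₂ : Cfg p₂)
    (hc : p₁.card = p₂.card) : Nonempty (graphOfC p₁ ≃g graphOfC p₂) := by
  classical
  have hb₁ := phi_bijective h₁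
  have hb₂ := phi_bijective h₂
  have hcT : Fintype.card {v : Fin t // ¬ v ∈ Tset p₁}
      = Fintype.card {v : Fin t // ¬ v ∈ Tset p₂} := by
    have hT : (Tset p₁).card = (Tset p₂).card := by
      rw [card_Tset h₁, card_Tset h₂, hc]
    rw [Fintype.card_subtype_compl, Fintype.card_subtype_compl]
    have e1 : Fintype.card {v : Fin t // v ∈ Tset p₁} = (Tset p₁).card := Fintype.card_coe _
    have e2 : Fintype.card {v : Fin t // v ∈ Tset p₂} = (Tset p₂).card := Fintype.card_coe _
    rw [e1, e2, hT]
  let ep : ↥p₁ ≃ ↥p₂ := Finset.equivOfCardEq hc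
  let e : {v : Fin t // v ∈ Tset p₁} ≃ {v : Fin t // v ∈ Tset p₂} :=
    (Equiv.ofBijective _ hb₁).symm.trans
      ((Equiv.prodCongr ep (Equiv.refl Bool)).trans (Equiv.ofBijective _ hb₂))
  let ec : {v : Fin t // ¬ v ∈ Tset p₁} ≃ {v : Fin t // ¬ v ∈ Tset p₂} :=
    Fintype.equivOfCardEq hcT
  let σ : Fin t ≃ Fin t := (Equiv.sumCompl (· ∈ Tset p₁)).symm.trans
    ((Equiv.sumCongr e ec).trans (Equiv.sumCompl (· ∈ Tset p₂)))
  have hσT : ∀ (v : Fin t) (hv : v ∈ Tset p₁), σ v = (e ⟨v, hv⟩).1 := by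
    intro v hv
    simp only [σ, Equiv.trans_apply]
    rw [Equiv.sumCompl_symm_apply_of_pos hv]
    rfl
  have he : ∀ (z : ↥p₁ × Bool), e (phi p₁ z) = phi p₂ (ep z.1, z.2) := by
    intro z
    simp only [e, Equiv.trans_apply]
    rw [show phi p₁ z = (Equiv.ofBijective _ hb₁) z from rfl, Equiv.symm_apply_apply]
    rfl
  have hkey : ∀ (x : Fin t × Fin t) (hx : x ∈ p₁),
      σ x.1 = ((ep ⟨x, hx⟩ : ↥p₂) : Fin t × Fin t).1 ∧
      σ x.2 = ((ep ⟨x, hx⟩ : ↥p₂) : Fin t × Fin t).2 := by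
    intro x hx
    have m1 : x.1 ∈ Tset p₁ := mem_Tset_fst hx
    have m2 : x.2 ∈ Tset p₁ := mem_Tset_snd hx
    constructor
    · rw [hσT x.1 m1,
        show (⟨x.1, m1⟩ : {v : Fin t // v ∈ Tset p₁}) = phi p₁ (⟨x, hx⟩, true) from rfl,
        he]
      rfl
    · rw [hσT x.2 m2,
        show (⟨x.2, m2⟩ : {v : Fin t // v ∈ Tset p₁}) = phi p₁ (⟨x, hx⟩, false) from rfl,
        he]
      rfl
  refine ⟨⟨σ, ?_⟩⟩
  intro u v
  simp only [graphOfC, SimpleGraph.fromRel_adj]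
  constructor
  · rintro ⟨hne, hy | hy⟩
    · set z : ↥p₁ := ep.symm ⟨(σ u, σ v), hy⟩ with hzdef
      have hz := hkey (z : Fin t × Fin t) z.2
      have hepz : (ep z : ↥p₂) = ⟨(σ u, σ v), hy⟩ := by
        rw [hzdef, Equiv.apply_symm_apply]
      rw [hepz] at hz
      have hu : (z : Fin t × Fin t).1 = u := σ.injective hz.1
      have hv' : (z : Fin t × Fin t).2 = v := σ.injective hz.2
      refine ⟨fun h => hne (congrArg σ h), Or.inl ?_⟩
      have : ((u, v) : Fin t × Fin t) = (z : Fin t × Fin t) := by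
        rw [← hu, ← hv']
      rw [this]
      exact z.2
    · set z : ↥p₁ := ep.symm ⟨(σ v, σ u), hy⟩ with hzdef
      have hz := hkey (z : Fin t × Fin t) z.2
      have hepz : (ep z : ↥p₂) = ⟨(σ v, σ u), hy⟩ := by
        rw [hzdef, Equiv.apply_symm_apply]
      rw [hepz] at hz
      have hu : (z : Fin t × Fin t).1 = v := σ.injective hz.1
      have hv' : (z : Fin t × Fin t).2 = u := σ.injective hz.2
      refine ⟨fun h => hne (congrArg σ h), Or.inr ?_⟩
      have : ((v, u) : Fin t × Fin t) = (z : Fin t × Fin t) := by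
        rw [← hu, ← hv']
      rw [this]
      exact z.2
  · rintro ⟨hne, hx | hx⟩
    · have hz := hkey (u, v) hx
      refine ⟨σ.injective.ne hne, Or.inl ?_⟩
      have : ((σ u, σ v) : Fin t × Fin t) = ((ep ⟨(u, v), hx⟩ : ↥p₂) : Fin t × Fin t) :=
        Prod.ext hz.1 hz.2
      rw [this]
      exact (ep ⟨(u, v), hx⟩).2
    · have hz := hkey (v, u) hx
      refine ⟨σ.injective.ne hne, Or.inr ?_⟩
      have : ((σ v, σ u) : Fin t × Fin t) = ((ep ⟨(v, u), hx⟩ : ↥p₂) : Fin t × Fin t) :=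
        Prod.ext hz.1 hz.2
      rw [this]
      exact (ep ⟨(v, u), hx⟩).2

lemma prod_sort_map (A : Finset (Fin t)) (f : Fin t → ℝ) :
    ((A.sort (· ≤ ·)).map f).prod = ∏ a ∈ A, f a := by
  rw [Finset.prod_eq_multiset_prod, ← Finset.sort_eq (s := A) (r := (· ≤ ·)), Multiset.map_coe,
    Multiset.prod_coe]

lemma filter_copies {s : ℕ} (G : SimpleGraph (Fin t)) (hcard : G.edgeSet.ncard = s)
    (hmatch : ∀ v, (G.neighborSet v).ncard ≤ 1)
    [DecidablePred (fun G' : SimpleGraph (Fin t) => Nonempty (G' ≃g G))]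
    [DecidablePred (fun G' : SimpleGraph (Fin t) =>
      (∀ v, (G'.neighborSet v).ncard ≤ 1) ∧ G'.edgeSet.ncard = s)] :
    (univ.filter (fun G' : SimpleGraph (Fin t) => Nonempty (G' ≃g G))) =
    (univ.filter (fun G' : SimpleGraph (Fin t) =>
      (∀ v, (G'.neighborSet v).ncard ≤ 1) ∧ G'.edgeSet.ncard = s)) := by
  ext G'
  simp only [Finset.mem_filter, Finset.mem_univ, true_and]
  constructor
  · rintro ⟨f⟩
    constructor
    · intro v
      have : (G'.neighborSet v).ncard = (G.neighborSet (f v)).ncard := by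
        rw [← Nat.card_coe_set_eq, ← Nat.card_coe_set_eq]
        exact Nat.card_congr (f.mapNeighborSet v)
      rw [this]; exact hmatch _
    · have : G'.edgeSet.ncard = G.edgeSet.ncard := by
        rw [← Nat.card_coe_set_eq, ← Nat.card_coe_set_eq]
        exact Nat.card_congr f.mapEdgeSet
      rw [this, hcard]
  · rintro ⟨hdeg, hc⟩
    have e1 := graphOf_pOf G'
    have e2 := graphOf_pOf G
    have hcc : (pOf G').card = (pOf G).card := by rw [card_pOf, card_pOf, hc, hcard]
    rw [← e1, ← e2]
    exact iso_of_cfg (cfg_pOf hdeg) (cfg_pOf hmatch) hcc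

lemma per_A {s : ℕ} (A : Finset (Fin t)) (hAcard : A.card = s) :
    (NN A : ℝ) * (∏ a ∈ A, ((a : ℕ) : ℝ))⁻¹ =
    ∏ j ∈ range s,
      ((((A.image fun v : Fin t => (v : ℕ) + 1).sort (· ≤ ·)).getD j 0 : ℝ) + 1
          - 2 * ((j : ℝ) + 1)) /
        ((((A.image fun v : Fin t => (v : ℕ) + 1).sort (· ≤ ·)).getD j 0 : ℝ) - 1) := by
  rw [sort_image_shift]
  have hfac : ∀ j ∈ range s,
      ((((A.sort (· ≤ ·)).map fun v : Fin t => (v : ℕ) + 1).getD j 0 : ℝ) + 1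
          - 2 * ((j : ℝ) + 1)) /
        ((((A.sort (· ≤ ·)).map fun v : Fin t => (v : ℕ) + 1).getD j 0 : ℝ) - 1)
      = ((((A.sort (· ≤ ·)).map Fin.val).getD j 0 : ℝ) - 2 * (j : ℝ))
          * ((((A.sort (· ≤ ·)).map Fin.val).getD j 0 : ℝ))⁻¹ := by
    intro j hj
    have hj' : j < (A.sort (· ≤ ·)).length := by
      rw [Finset.length_sort, hAcard]; exact mem_range.mp hj
    have e1 : ((A.sort (· ≤ ·)).map fun v : Fin t => (v : ℕ) + 1).getD j 0
        = ((A.sort (· ≤ ·)).map Fin.val).getD j 0 + 1 := by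
      rw [List.getD_eq_getElem _ _ (by simpa using hj'),
        List.getD_eq_getElem _ _ (by simpa using hj')]
      simp
    rw [e1]
    push_cast
    rw [div_eq_mul_inv]
    ring_nf
  rw [Finset.prod_congr rfl hfac, Finset.prod_mul_distrib, ← hAcard, ← master,
    Finset.prod_inv_distrib]
  have h2 := prod_range_getD ((A.sort (· ≤ ·)).map Fin.val) (fun n : ℕ => (n : ℝ)) 0
  rw [List.length_map, Finset.length_sort] at h2
  have h3 : ∏ j ∈ range A.card, (((A.sort (· ≤ ·)).map Fin.val).getD j 0 : ℝ)
      = ∏ a ∈ A, ((a : ℕ) : ℝ) := by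
    rw [h2, List.map_map]
    exact prod_sort_map A _
  rw [h3]

theorem likelihood_matching {t s : ℕ} (ht : 1 ≤ t) (hs : 2 * s ≤ t)
    (G : SimpleGraph (Fin t))
    (hcard : G.edgeSet.ncard = s)
    (hmatch : ∀ v : Fin t, (G.neighborSet v).ncard ≤ 1) :
    likelihood G =
      (1 / (t.factorial : ℝ)) *
        ∑ A ∈ (Finset.Icc 2 t).powersetCard s,
          ∏ j ∈ Finset.range s,
            (((A.sort (· ≤ ·)).getD j 0 : ℝ) + 1 - 2 * ((j : ℝ) + 1)) /
              (((A.sort (· ≤ ·)).getD j 0 : ℝ) - 1) := by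
  classical
  rw [likelihood, filter_copies G hcard hmatch]
  have step1 : ∑ G' ∈ univ.filter (fun G' : SimpleGraph (Fin t) =>
        (∀ v, (G'.neighborSet v).ncard ≤ 1) ∧ G'.edgeSet.ncard = s),
        (1 : ℝ) / ((t.factorial : ℝ) * ∏ i : Fin t, ((i : ℕ).choose (dBelow G' i) : ℝ))
      = ∑ p ∈ univ.filter (fun p : Finset (Fin t × Fin t) => Cfg p ∧ p.card = s),
        (1 : ℝ) / ((t.factorial : ℝ) * ∏ x ∈ p, ((x.1 : ℕ) : ℝ)) := by
    refine Finset.sum_nbij' (fun G' => pOf G') (fun p => graphOfC p) ?_ ?_ ?_ ?_ ?_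
    · intro G' hG'
      rw [Finset.mem_filter] at hG' ⊢
      exact ⟨Finset.mem_univ _, cfg_pOf hG'.2.1, by rw [card_pOf, hG'.2.2]⟩
    · intro p hp
      rw [Finset.mem_filter] at hp ⊢
      obtain ⟨_, hc, hcd⟩ := hp
      refine ⟨Finset.mem_univ _, deg_graphOf hc, ?_⟩
      rw [← card_pOf (M := graphOfC p), pOf_graphOf hc]
      exact hcd
    · intro G' _; exact graphOf_pOf G'
    · intro p hp
      rw [Finset.mem_filter] at hp
      exact pOf_graphOf hp.2.1
    · intro G' hG'
      rw [Finset.mem_filter] at hG'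
      rw [choose_prod hG'.2.1]
  rw [step1]
  set B := ((univ.filter fun v : Fin t => (v : ℕ) ≠ 0)).powersetCard s with hB
  have hmap : ∀ p ∈ univ.filter (fun p : Finset (Fin t × Fin t) => Cfg p ∧ p.card = s),
      p.image Prod.fst ∈ B := by
    intro p hp
    rw [Finset.mem_filter] at hp
    rw [hB, Finset.mem_powersetCard]
    refine ⟨?_, by rw [card_image_fst hp.2.1, hp.2.2]⟩
    intro v hv
    obtain ⟨x, hx, hxv⟩ := Finset.mem_image.mp hv
    rw [Finset.mem_filter]
    refine ⟨Finset.mem_univ _, ?_⟩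
    have h2 : (x.2 : ℕ) < (x.1 : ℕ) := hp.2.1.1 x hx
    rw [← hxv]
    omega
  rw [← Finset.sum_fiberwise_of_maps_to hmap]
  have hfiber : ∀ A ∈ B,
      ∑ p ∈ (univ.filter (fun p : Finset (Fin t × Fin t) =>
          Cfg p ∧ p.card = s)).filter (fun p => p.image Prod.fst = A),
        (1 : ℝ) / ((t.factorial : ℝ) * ∏ x ∈ p, ((x.1 : ℕ) : ℝ))
      = (1 / (t.factorial : ℝ)) * ((NN A : ℝ) * (∏ a ∈ A, ((a : ℕ) : ℝ))⁻¹) := by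
    intro A hA
    rw [hB, Finset.mem_powersetCard] at hA
    have hAfil : (univ.filter (fun p : Finset (Fin t × Fin t) =>
          Cfg p ∧ p.card = s)).filter (fun p => p.image Prod.fst = A)
        = univ.filter (fun p : Finset (Fin t × Fin t) => Cfg p ∧ p.image Prod.fst = A) := by
      ext p
      simp only [Finset.mem_filter, Finset.mem_univ, true_and]
      constructor
      · rintro ⟨⟨hc, _⟩, himg⟩; exact ⟨hc, himg⟩
      · rintro ⟨hc, himg⟩
        exact ⟨⟨hc, by rw [← hA.2, ← himg, card_image_fst hc]⟩, himg⟩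
    rw [hAfil]
    have hterm : ∀ p ∈ univ.filter (fun p : Finset (Fin t × Fin t) =>
          Cfg p ∧ p.image Prod.fst = A),
        (1 : ℝ) / ((t.factorial : ℝ) * ∏ x ∈ p, ((x.1 : ℕ) : ℝ))
        = (1 / (t.factorial : ℝ)) * (∏ a ∈ A, ((a : ℕ) : ℝ))⁻¹ := by
      intro p hp
      rw [Finset.mem_filter] at hp
      have hpr : ∏ a ∈ A, ((a : ℕ) : ℝ) = ∏ x ∈ p, ((x.1 : ℕ) : ℝ) := by
        rw [← hp.2.2]
        exact Finset.prod_image (fun x hx y hy hxy => by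
          by_contra hne
          exact (hp.2.1.2 x hx y hy hne).1 hxy)
      rw [hpr, one_div, one_div, mul_inv]
    rw [Finset.sum_congr rfl hterm, Finset.sum_const]
    have hcardA : (univ.filter (fun p : Finset (Fin t × Fin t) =>
        Cfg p ∧ p.image Prod.fst = A)).card = NN A := by
      rw [NN]
    rw [hcardA, nsmul_eq_mul]
    ring
  rw [Finset.sum_congr rfl hfiber, ← Finset.mul_sum]
  congr 1
  refine Finset.sum_bij (fun A _ => A.image (fun v : Fin t => (v : ℕ) + 1)) ?_ ?_ ?_ ?_
  · intro A hA
    rw [hB, Finset.mem_powersetCard] at hA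
    rw [Finset.mem_powersetCard]
    constructor
    · intro n hn
      obtain ⟨v, hv, rfl⟩ := Finset.mem_image.mp hn
      have h0 := (Finset.mem_filter.mp (hA.1 hv)).2
      have h1 := v.isLt
      rw [Finset.mem_Icc]
      omega
    · rw [Finset.card_image_of_injective _
        (fun x y h => Fin.val_injective (by omega : (x : ℕ) = (y : ℕ))), hA.2]
  · intro A₁ h₁ A₂ h₂ he
    exact Finset.image_injective
      (fun x y h => Fin.val_injective (by omega : (x : ℕ) = (y : ℕ))) he
  · intro A' hA'
    rw [Finset.mem_powersetCard] at hA'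
    have hf : ∀ n : {x // x ∈ A'}, (n : ℕ) - 1 < t := fun n => by
      have := Finset.mem_Icc.mp (hA'.1 n.2); omega
    set f : {x // x ∈ A'} → Fin t := fun n => ⟨(n : ℕ) - 1, hf n⟩ with hfdef
    have hfi : Set.InjOn f ↑A'.attach := by
      intro x _ y _ hxy
      have hx2 := Finset.mem_Icc.mp (hA'.1 x.2)
      have hy2 := Finset.mem_Icc.mp (hA'.1 y.2)
      have hv : (x : ℕ) - 1 = (y : ℕ) - 1 := congrArg Fin.val hxy
      exact Subtype.ext (by omega)
    refine ⟨A'.attach.image f, ?_, ?_⟩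
    · rw [hB, Finset.mem_powersetCard]
      constructor
      · intro v hv
        obtain ⟨n, _, rfl⟩ := Finset.mem_image.mp hv
        have := Finset.mem_Icc.mp (hA'.1 n.2)
        rw [Finset.mem_filter]
        refine ⟨Finset.mem_univ _, ?_⟩
        have hval : ((f n : Fin t) : ℕ) = (n : ℕ) - 1 := rfl
        rw [hval]
        omega
      · rw [Finset.card_image_of_injOn hfi, Finset.card_attach, hA'.2]
    · ext m
      constructor
      · intro hm
        obtain ⟨v, hv, rfl⟩ := Finset.mem_image.mp hm
        obtain ⟨n, _, rfl⟩ := Finset.mem_image.mp hv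
        have := Finset.mem_Icc.mp (hA'.1 n.2)
        have hval : ((f n : Fin t) : ℕ) = (n : ℕ) - 1 := rfl
        rw [hval]
        have h4 : (n : ℕ) - 1 + 1 = (n : ℕ) := by omega
        rw [h4]
        exact n.2
      · intro hm
        have := Finset.mem_Icc.mp (hA'.1 hm)
        refine Finset.mem_image.mpr ⟨f ⟨m, hm⟩,
          Finset.mem_image.mpr ⟨⟨m, hm⟩, Finset.mem_attach _ _, rfl⟩, ?_⟩
        have hval : ((f ⟨m, hm⟩ : Fin t) : ℕ) = m - 1 := rfl
        rw [hval]
        omega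
  · intro A hA
    rw [hB, Finset.mem_powersetCard] at hA
    exact per_A A hA.2
end

section
/- Let G be a simple graph on t ≥ 4 vertices whose edge set consists of exactly two disjoint edges (a matching with two edges, incident with four distinct vertices). Then L(G) = (1/t!) · Σ_{i=2}^{t} Σ_{j=i+1}^{t} (j−3)/(j−1), i.e., L(G) = (1/t!) · Σ_{i=2}^{t} ((i−2)/i + (i−1)/(i+1) + ⋯ + (t−3)/(t−1)). -/
open Finset

section Aux

variable {t : ℕ} {a b c d : Fin t}

/-- The canonical graph with two edges `{a,b}` and `{c,d}`. -/
def twoE (a b c d : Fin t) : SimpleGraph (Fin t) :=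
  SimpleGraph.fromEdgeSet {s(a, b), s(c, d)}

lemma twoE_adj (hab : a ≠ b) (hcd : c ≠ d) {x y : Fin t} :
    (twoE a b c d).Adj x y ↔
      (x = a ∧ y = b) ∨ (x = b ∧ y = a) ∨ (x = c ∧ y = d) ∨ (x = d ∧ y = c) := by
  simp only [twoE, SimpleGraph.fromEdgeSet_adj, Set.mem_insert_iff, Set.mem_singleton_iff,
    Sym2.eq_iff]
  constructor
  · rintro ⟨h | h, -⟩ <;> tauto
  · rintro (⟨rfl, rfl⟩ | ⟨rfl, rfl⟩ | ⟨rfl, rfl⟩ | ⟨rfl, rfl⟩) <;>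
      refine ⟨by tauto, by tauto⟩

lemma twoE_edgeSet (hab : a ≠ b) (hcd : c ≠ d) :
    (twoE a b c d).edgeSet = {s(a, b), s(c, d)} := by
  rw [twoE, SimpleGraph.edgeSet_fromEdgeSet]
  ext e
  simp only [Set.mem_diff, Set.mem_setOf_eq]
  refine ⟨fun h => h.1, fun h => ⟨h, ?_⟩⟩
  rcases h with rfl | rfl <;> simp [Sym2.mk_isDiag_iff, hab, hcd]

lemma exists_twoE {H : SimpleGraph (Fin t)} (h2 : H.edgeSet.ncard = 2)
    (h1 : ∀ v, (H.neighborSet v).ncard ≤ 1) :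
    ∃ a b c d : Fin t, a < b ∧ c < d ∧ b < d ∧ a ≠ c ∧ b ≠ c ∧ H = twoE a b c d := by
  have key : ∀ z w w' : Fin t, H.Adj z w → H.Adj z w' → w = w' := by
    intro z w w' h h'
    exact (Set.ncard_le_one_iff (Set.toFinite _)).mp (h1 z) h h'
  obtain ⟨e, f, hef, hset⟩ := Set.ncard_eq_two.mp h2
  have norm : ∀ x y : Fin t, x ≠ y →
      ∃ p q, p < q ∧ s(x, y) = s(p, q) ∧ (p = x ∨ p = y) ∧ (q = x ∨ q = y) := by
    intro x y h
    rcases h.lt_or_gt with h' | h'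
    · exact ⟨x, y, h', rfl, Or.inl rfl, Or.inr rfl⟩
    · exact ⟨y, x, h', Sym2.eq_swap.symm, Or.inr rfl, Or.inl rfl⟩
  induction e using Sym2.ind with | _ x y => ?_
  induction f using Sym2.ind with | _ u v => ?_
  have hxy : H.Adj x y := by rw [← SimpleGraph.mem_edgeSet, hset]; simp
  have huv : H.Adj u v := by rw [← SimpleGraph.mem_edgeSet, hset]; simp
  have hxu : x ≠ u := by
    rintro rfl
    exact hef (by rw [key x y v hxy huv])
  have hxv : x ≠ v := by
    rintro rfl
    exact hef (by rw [key x y u hxy huv.symm, Sym2.eq_swap])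
  have hyu : y ≠ u := by
    rintro rfl
    exact hef (by rw [key y x v hxy.symm huv, Sym2.eq_swap])
  have hyv : y ≠ v := by
    rintro rfl
    exact hef (by rw [key y x u hxy.symm huv.symm])
  obtain ⟨p, q, hpq, hepq, hp, hq⟩ := norm x y hxy.ne
  obtain ⟨r, w, hrw, hfrw, hr, hw⟩ := norm u v huv.ne
  have hHeq : H = SimpleGraph.fromEdgeSet {s(p, q), s(r, w)} := by
    conv_lhs => rw [← SimpleGraph.fromEdgeSet_edgeSet H]
    rw [hset, hepq, hfrw]
  have hpr : p ≠ r := by rcases hp with rfl | rfl <;> rcases hr with rfl | rfl <;> assumption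
  have hpw : p ≠ w := by rcases hp with rfl | rfl <;> rcases hw with rfl | rfl <;> assumption
  have hqr : q ≠ r := by rcases hq with rfl | rfl <;> rcases hr with rfl | rfl <;> assumption
  have hqw : q ≠ w := by rcases hq with rfl | rfl <;> rcases hw with rfl | rfl <;> assumption
  rcases hqw.lt_or_gt with h | h
  · exact ⟨p, q, r, w, hpq, hrw, h, hpr, hqr, hHeq⟩
  · refine ⟨r, w, p, q, hrw, hpq, h, hpr.symm, hpw.symm, ?_⟩
    rw [hHeq, Set.pair_comm]
    rfl

lemma twoE_iso {a' b' c' d' : Fin t}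
    (hab : a ≠ b) (hac : a ≠ c) (had : a ≠ d) (hbc : b ≠ c) (hbd : b ≠ d) (hcd : c ≠ d)
    (hab' : a' ≠ b') (hac' : a' ≠ c') (had' : a' ≠ d') (hbc' : b' ≠ c') (hbd' : b' ≠ d')
    (hcd' : c' ≠ d') :
    Nonempty (twoE a b c d ≃g twoE a' b' c' d') := by
  classical
  set p : Fin t → Prop := fun x => x = a ∨ x = b ∨ x = c ∨ x = d with hpdef
  set q : Fin t → Prop := fun x => x = a' ∨ x = b' ∨ x = c' ∨ x = d' with hqdef
  let e : { x // p x } ≃ { x // q x } :=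
    { toFun := fun x =>
        if x.1 = a then ⟨a', Or.inl rfl⟩
        else if x.1 = b then ⟨b', Or.inr (Or.inl rfl)⟩
        else if x.1 = c then ⟨c', Or.inr (Or.inr (Or.inl rfl))⟩
        else ⟨d', Or.inr (Or.inr (Or.inr rfl))⟩
      invFun := fun x =>
        if x.1 = a' then ⟨a, Or.inl rfl⟩
        else if x.1 = b' then ⟨b, Or.inr (Or.inl rfl)⟩
        else if x.1 = c' then ⟨c, Or.inr (Or.inr (Or.inl rfl))⟩
        else ⟨d, Or.inr (Or.inr (Or.inr rfl))⟩
      left_inv := by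
        rintro ⟨x, rfl | rfl | rfl | rfl⟩ <;>
          simp [hab, hab.symm, hac, hac.symm, had, had.symm, hbc, hbc.symm, hbd, hbd.symm,
            hcd, hcd.symm, hab', hab'.symm, hac', hac'.symm, had', had'.symm, hbc', hbc'.symm,
            hbd', hbd'.symm, hcd', hcd'.symm]
      right_inv := by
        rintro ⟨x, rfl | rfl | rfl | rfl⟩ <;>
          simp [hab, hab.symm, hac, hac.symm, had, had.symm, hbc, hbc.symm, hbd, hbd.symm,
            hcd, hcd.symm, hab', hab'.symm, hac', hac'.symm, had', had'.symm, hbc', hbc'.symm,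
            hbd', hbd'.symm, hcd', hcd'.symm] }
  have hcardc : Fintype.card { x // ¬p x } = Fintype.card { x // ¬q x } := by
    rw [Fintype.card_subtype_compl, Fintype.card_subtype_compl, Fintype.card_congr e]
  let f : { x // ¬p x } ≃ { x // ¬q x } := Fintype.equivOfCardEq hcardc
  let π : Equiv.Perm (Fin t) := Equiv.subtypeCongr e f
  have hpos : ∀ (x : Fin t) (hx : p x), π x = (e ⟨x, hx⟩ : Fin t) := by
    intro x hx
    simp [π, Equiv.subtypeCongr, Equiv.sumCompl_symm_apply_of_pos hx]
  have hπa : π a = a' := by rw [hpos a (Or.inl rfl)]; simp [e]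
  have hπb : π b = b' := by rw [hpos b (Or.inr (Or.inl rfl))]; simp [e, hab.symm]
  have hπc : π c = c' := by
    rw [hpos c (Or.inr (Or.inr (Or.inl rfl)))]; simp [e, hac.symm, hbc.symm]
  have hπd : π d = d' := by
    rw [hpos d (Or.inr (Or.inr (Or.inr rfl)))]; simp [e, had.symm, hbd.symm, hcd.symm]
  refine ⟨⟨π, ?_⟩⟩
  intro x y
  rw [twoE_adj hab' hcd', twoE_adj hab hcd]
  simp only [← hπa, ← hπb, ← hπc, ← hπd, Equiv.apply_eq_iff_eq]

lemma iso_transfer {H G : SimpleGraph (Fin t)} (f : H ≃g G)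
    (h2 : G.edgeSet.ncard = 2) (h1 : ∀ v, (G.neighborSet v).ncard ≤ 1) :
    H.edgeSet.ncard = 2 ∧ ∀ v, (H.neighborSet v).ncard ≤ 1 := by
  constructor
  · rw [← h2, ← Nat.card_coe_set_eq, ← Nat.card_coe_set_eq]
    exact Nat.card_congr f.mapEdgeSet
  · intro v
    have h := Nat.card_congr (f.mapNeighborSet v)
    rw [Nat.card_coe_set_eq, Nat.card_coe_set_eq] at h
    rw [h]
    exact h1 (f v)

lemma dBelow_twoE (hab : a < b) (hcd : c < d) (hbd : b < d) (hac : a ≠ c) (hbc : b ≠ c)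
    (i : Fin t) :
    dBelow (twoE a b c d) i = if i = b then 1 else if i = d then 1 else 0 := by
  have had : a ≠ d := (hab.trans hbd).ne
  rw [dBelow]
  by_cases hib : i = b
  · rw [if_pos hib]
    have hs : {j | (twoE a b c d).Adj i j ∧ j < i} = {a} := by
      ext j
      simp only [Set.mem_setOf_eq, twoE_adj hab.ne hcd.ne, Set.mem_singleton_iff]
      constructor
      · rintro ⟨(⟨h1, h2⟩ | ⟨h1, h2⟩ | ⟨h1, h2⟩ | ⟨h1, h2⟩), hlt⟩
        · exact absurd (h1.symm.trans hib) hab.ne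
        · exact h2
        · exact absurd (h1.symm.trans hib) (Ne.symm hbc)
        · exact absurd (h1.symm.trans hib) hbd.ne'
      · rintro rfl
        exact ⟨Or.inr (Or.inl ⟨hib, rfl⟩), hab.trans_eq hib.symm⟩
    rw [hs, Set.ncard_singleton]
  · by_cases hid : i = d
    · rw [if_neg hib, if_pos hid]
      have hs : {j | (twoE a b c d).Adj i j ∧ j < i} = {c} := by
        ext j
        simp only [Set.mem_setOf_eq, twoE_adj hab.ne hcd.ne, Set.mem_singleton_iff]
        constructor
        · rintro ⟨(⟨h1, h2⟩ | ⟨h1, h2⟩ | ⟨h1, h2⟩ | ⟨h1, h2⟩), hlt⟩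
          · exact absurd (h1.symm.trans hid) had
          · exact absurd (h1.symm.trans hid) hbd.ne
          · exact absurd (h1.symm.trans hid) hcd.ne
          · exact h2
        · rintro rfl
          exact ⟨Or.inr (Or.inr (Or.inr ⟨hid, rfl⟩)), hcd.trans_eq hid.symm⟩
      rw [hs, Set.ncard_singleton]
    · rw [if_neg hib, if_neg hid]
      have hs : {j | (twoE a b c d).Adj i j ∧ j < i} = ∅ := by
        rw [Set.eq_empty_iff_forall_notMem]
        intro j
        rw [Set.mem_setOf_eq, twoE_adj hab.ne hcd.ne]
        rintro ⟨(⟨h1, h2⟩ | ⟨h1, h2⟩ | ⟨h1, h2⟩ | ⟨h1, h2⟩), hlt⟩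
        · subst h1; subst h2; exact hab.asymm hlt
        · exact hib h1
        · subst h1; subst h2; exact hcd.asymm hlt
        · exact hid h1
      rw [hs, Set.ncard_empty]

lemma prod_choose_twoE (hab : a < b) (hcd : c < d) (hbd : b < d) (hac : a ≠ c) (hbc : b ≠ c) :
    ∏ i : Fin t, (i : ℕ).choose (dBelow (twoE a b c d) i) = (b : ℕ) * (d : ℕ) := by
  have hbd' : b ≠ d := hbd.ne
  calc ∏ i : Fin t, (i : ℕ).choose (dBelow (twoE a b c d) i)
      = ∏ i : Fin t, (if i = b then (b : ℕ) else if i = d then (d : ℕ) else 1) := by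
        refine Finset.prod_congr rfl fun i _ => ?_
        rw [dBelow_twoE hab hcd hbd hac hbc]
        by_cases hib : i = b
        · subst hib; simp
        · by_cases hid : i = d
          · subst hid; simp [hib]
          · simp [hib, hid]
    _ = ∏ i ∈ ({b, d} : Finset (Fin t)),
          (if i = b then (b : ℕ) else if i = d then (d : ℕ) else 1) := by
        refine (Finset.prod_subset (Finset.subset_univ _) ?_).symm
        intro i _ hi
        simp only [Finset.mem_insert, Finset.mem_singleton] at hi
        push_neg at hi
        rw [if_neg hi.1, if_neg hi.2]
    _ = (b : ℕ) * (d : ℕ) := by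
        rw [Finset.prod_insert (by simp [hbd']), Finset.prod_singleton]
        simp [hbd', Ne.symm hbd']

lemma sym2_ordered_eq {x y x' y' : Fin t} (h : x < y) (h' : x' < y')
    (he : s(x, y) = s(x', y')) : x = x' ∧ y = y' := by
  rw [Sym2.eq_iff] at he
  rcases he with ⟨rfl, rfl⟩ | ⟨rfl, rfl⟩
  · exact ⟨rfl, rfl⟩
  · exact absurd (h.trans h') (lt_irrefl _)

lemma twoE_inj {a' b' c' d' : Fin t}
    (hab : a < b) (hcd : c < d) (hbd : b < d) (hac : a ≠ c)
    (hab' : a' < b') (hcd' : c' < d') (hbd' : b' < d') (hac' : a' ≠ c')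
    (h : twoE a b c d = twoE a' b' c' d') :
    a = a' ∧ b = b' ∧ c = c' ∧ d = d' := by
  have he := congrArg SimpleGraph.edgeSet h
  rw [twoE_edgeSet hab.ne hcd.ne, twoE_edgeSet hab'.ne hcd'.ne] at he
  have h1 : s(a, b) = s(a', b') ∨ s(a, b) = s(c', d') := by
    have : s(a, b) ∈ ({s(a', b'), s(c', d')} : Set (Sym2 (Fin t))) := he ▸ (by simp)
    simpa using this
  have h2 : s(c, d) = s(a', b') ∨ s(c, d) = s(c', d') := by
    have : s(c, d) ∈ ({s(a', b'), s(c', d')} : Set (Sym2 (Fin t))) := he ▸ (by simp)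
    simpa using this
  rcases h1 with h1 | h1 <;> rcases h2 with h2 | h2
  · obtain ⟨rfl, rfl⟩ := sym2_ordered_eq hab hab' h1
    obtain ⟨rfl, -⟩ := sym2_ordered_eq hcd hab' h2
    exact absurd rfl hac
  · obtain ⟨rfl, rfl⟩ := sym2_ordered_eq hab hab' h1
    obtain ⟨rfl, rfl⟩ := sym2_ordered_eq hcd hcd' h2
    exact ⟨rfl, rfl, rfl, rfl⟩
  · obtain ⟨rfl, rfl⟩ := sym2_ordered_eq hab hcd' h1
    obtain ⟨rfl, rfl⟩ := sym2_ordered_eq hcd hab' h2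
    exact absurd (hbd.trans hbd') (lt_irrefl _)
  · obtain ⟨h3, -⟩ := sym2_ordered_eq hab hcd' h1
    obtain ⟨h5, -⟩ := sym2_ordered_eq hcd hcd' h2
    exact absurd (h3.trans h5.symm) hac

lemma count_step (w : Fin t → Fin t → ℝ) :
    ∑ x ∈ Finset.univ.filter (fun x : Fin t × Fin t × Fin t × Fin t =>
        x.1 < x.2.1 ∧ x.2.2.1 < x.2.2.2 ∧ x.2.1 < x.2.2.2 ∧ x.1 ≠ x.2.2.1 ∧ x.2.1 ≠ x.2.2.1),
      w x.2.1 x.2.2.2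
    = ∑ b : Fin t, ∑ d : Fin t,
        if b < d then ((b : ℕ) * ((d : ℕ) - 2)) • w b d else 0 := by
  classical
  rw [Finset.sum_filter]
  simp only [Fintype.sum_prod_type]
  rw [Finset.sum_comm]
  have swap1 : ∀ (bb aa : Fin t),
      (∑ cc : Fin t, ∑ dd : Fin t,
        if aa < bb ∧ cc < dd ∧ bb < dd ∧ aa ≠ cc ∧ bb ≠ cc then w bb dd else 0)
      = ∑ dd : Fin t, ∑ cc : Fin t,
        if aa < bb ∧ cc < dd ∧ bb < dd ∧ aa ≠ cc ∧ bb ≠ cc then w bb dd else 0 :=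
    fun _ _ => Finset.sum_comm
  simp only [swap1]
  refine Finset.sum_congr rfl fun bb _ => ?_
  rw [Finset.sum_comm]
  refine Finset.sum_congr rfl fun dd _ => ?_
  have inner_c : ∀ aa : Fin t,
      (∑ cc : Fin t, if aa < bb ∧ cc < dd ∧ bb < dd ∧ aa ≠ cc ∧ bb ≠ cc then w bb dd else 0)
      = if aa < bb ∧ bb < dd then ((dd : ℕ) - 2) • w bb dd else 0 := by
    intro aa
    by_cases h : aa < bb ∧ bb < dd
    · rw [if_pos h]
      have hcond : ∀ cc : Fin t,
          (aa < bb ∧ cc < dd ∧ bb < dd ∧ aa ≠ cc ∧ bb ≠ cc) ↔ (cc < dd ∧ aa ≠ cc ∧ bb ≠ cc) :=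
        fun cc => by tauto
      simp only [hcond]
      rw [← Finset.sum_filter, Finset.sum_const]
      congr 1
      have hset : Finset.univ.filter (fun cc : Fin t => cc < dd ∧ aa ≠ cc ∧ bb ≠ cc)
          = ((Finset.Iio dd).erase aa).erase bb := by
        ext cc
        simp only [Finset.mem_filter, Finset.mem_univ, true_and, Finset.mem_erase,
          Finset.mem_Iio]
        constructor
        · rintro ⟨h1, h2, h3⟩
          exact ⟨Ne.symm h3, Ne.symm h2, h1⟩
        · rintro ⟨h1, h2, h3⟩
          exact ⟨h3, Ne.symm h2, Ne.symm h1⟩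
      have hbmem : bb ∈ (Finset.Iio dd).erase aa :=
        Finset.mem_erase.2 ⟨h.1.ne', Finset.mem_Iio.2 h.2⟩
      rw [hset, Finset.card_erase_of_mem hbmem, Finset.card_erase_of_mem
        (Finset.mem_Iio.2 (h.1.trans h.2))]
      rw [Fin.card_Iio]
      omega
    · rw [if_neg h]
      exact Finset.sum_eq_zero fun cc _ => if_neg (by tauto)
  simp only [inner_c]
  by_cases hbd : bb < dd
  · rw [if_pos hbd]
    have hcond2 : ∀ aa : Fin t, (aa < bb ∧ bb < dd) ↔ aa < bb := fun aa => by tauto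
    simp only [hcond2]
    rw [← Finset.sum_filter, Finset.sum_const]
    have : Finset.univ.filter (fun aa : Fin t => aa < bb) = Finset.Iio bb := by
      ext aa; simp
    rw [this, Fin.card_Iio, smul_smul]
  · rw [if_neg hbd]
    exact Finset.sum_eq_zero fun aa _ => if_neg (by tauto)

lemma arith_step (t : ℕ) :
    (∑ p ∈ Finset.range t, ∑ q ∈ Finset.range t,
      if p < q then ((p * (q - 2) : ℕ) : ℝ) * (1 / ((t.factorial : ℝ) * ((p * q : ℕ) : ℝ)))
      else 0)
    = (1 / (t.factorial : ℝ)) *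
        ∑ i ∈ Finset.Icc 2 t, ∑ j ∈ Finset.Icc (i + 1) t, ((j : ℝ) - 3) / ((j : ℝ) - 1) := by
  have hfac : (t.factorial : ℝ) ≠ 0 := Nat.cast_ne_zero.mpr t.factorial_ne_zero
  have term : ∀ p q : ℕ,
      (if p < q then ((p * (q - 2) : ℕ) : ℝ) * (1 / ((t.factorial : ℝ) * ((p * q : ℕ) : ℝ)))
        else 0)
      = if 1 ≤ p ∧ p < q then
          (1 / (t.factorial : ℝ)) * ((((q + 1 : ℕ) : ℝ) - 3) / (((q + 1 : ℕ) : ℝ) - 1))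
        else 0 := by
    intro p q
    by_cases h1 : p < q
    · by_cases h2 : 1 ≤ p
      · rw [if_pos h1, if_pos ⟨h2, h1⟩]
        have hq2 : 2 ≤ q := by omega
        have hp0 : (p : ℝ) ≠ 0 := Nat.cast_ne_zero.mpr (by omega)
        have hq0 : (q : ℝ) ≠ 0 := Nat.cast_ne_zero.mpr (by omega)
        push_cast [Nat.cast_sub hq2]
        field_simp
        rw [add_sub_cancel_right, mul_div_cancel_left₀ _ hq0]
        ring
      · have hp : p = 0 := by omega
        subst hp
        simp
    · rw [if_neg h1, if_neg (by tauto)]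
  calc (∑ p ∈ Finset.range t, ∑ q ∈ Finset.range t,
        if p < q then ((p * (q - 2) : ℕ) : ℝ) * (1 / ((t.factorial : ℝ) * ((p * q : ℕ) : ℝ)))
        else 0)
      = ∑ x ∈ Finset.range t ×ˢ Finset.range t,
          (if 1 ≤ x.1 ∧ x.1 < x.2 then
            (1 / (t.factorial : ℝ)) * ((((x.2 + 1 : ℕ) : ℝ) - 3) / (((x.2 + 1 : ℕ) : ℝ) - 1))
          else 0) := by
        rw [Finset.sum_product]
        exact Finset.sum_congr rfl fun p _ => Finset.sum_congr rfl fun q _ => term p q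
    _ = ∑ x ∈ (Finset.range t ×ˢ Finset.range t).filter (fun x => 1 ≤ x.1 ∧ x.1 < x.2),
          (1 / (t.factorial : ℝ)) * ((((x.2 + 1 : ℕ) : ℝ) - 3) / (((x.2 + 1 : ℕ) : ℝ) - 1)) :=
        (Finset.sum_filter _ _).symm
    _ = ∑ y ∈ (Finset.Icc 2 t ×ˢ Finset.Icc 3 t).filter (fun y => y.1 < y.2),
          (1 / (t.factorial : ℝ)) * (((y.2 : ℝ) - 3) / ((y.2 : ℝ) - 1)) := by
        refine Finset.sum_nbij' (fun x => (x.1 + 1, x.2 + 1)) (fun y => (y.1 - 1, y.2 - 1))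
          ?_ ?_ ?_ ?_ ?_
        · intro x hx
          simp only [Finset.mem_filter, Finset.mem_product, Finset.mem_range,
            Finset.mem_Icc] at hx ⊢
          omega
        · intro y hy
          simp only [Finset.mem_filter, Finset.mem_product, Finset.mem_range,
            Finset.mem_Icc] at hy ⊢
          omega
        · intro x hx
          simp
        · intro y hy
          simp only [Finset.mem_filter, Finset.mem_product, Finset.mem_Icc] at hy
          dsimp only
          exact Prod.ext_iff.mpr ⟨by omega, by omega⟩
        · intro x hx
          rfl
    _ = ∑ i ∈ Finset.Icc 2 t, ∑ j ∈ Finset.Icc (i + 1) t,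
          (1 / (t.factorial : ℝ)) * (((j : ℝ) - 3) / ((j : ℝ) - 1)) := by
        rw [Finset.sum_filter, Finset.sum_product]
        refine Finset.sum_congr rfl fun i hi => ?_
        rw [← Finset.sum_filter]
        refine Finset.sum_congr ?_ fun j _ => rfl
        ext j
        simp only [Finset.mem_filter, Finset.mem_Icc]
        have h2i : 2 ≤ i := (Finset.mem_Icc.mp hi).1
        omega
    _ = (1 / (t.factorial : ℝ)) *
          ∑ i ∈ Finset.Icc 2 t, ∑ j ∈ Finset.Icc (i + 1) t, ((j : ℝ) - 3) / ((j : ℝ) - 1) := by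
        rw [Finset.mul_sum]
        exact Finset.sum_congr rfl fun i _ => (Finset.mul_sum _ _ _).symm

end Aux

theorem likelihood_twoDisjointEdges {t : ℕ} (ht : 4 ≤ t) (G : SimpleGraph (Fin t))
    (hcard : G.edgeSet.ncard = 2)
    (hdisj : ∀ v : Fin t, (G.neighborSet v).ncard ≤ 1) :
    likelihood G =
      (1 / (t.factorial : ℝ)) *
        ∑ i ∈ Finset.Icc 2 t, ∑ j ∈ Finset.Icc (i + 1) t,
          ((j : ℝ) - 3) / ((j : ℝ) - 1) := by
  classical
  obtain ⟨a₀, b₀, c₀, d₀, hab₀, hcd₀, hbd₀, hac₀, hbc₀, rfl⟩ := exists_twoE hcard hdisj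
  calc likelihood (twoE a₀ b₀ c₀ d₀)
      = ∑ x ∈ Finset.univ.filter (fun x : Fin t × Fin t × Fin t × Fin t =>
            x.1 < x.2.1 ∧ x.2.2.1 < x.2.2.2 ∧ x.2.1 < x.2.2.2 ∧
              x.1 ≠ x.2.2.1 ∧ x.2.1 ≠ x.2.2.1),
          1 / ((t.factorial : ℝ) * (((x.2.1 : ℕ) * (x.2.2.2 : ℕ) : ℕ) : ℝ)) := by
        rw [likelihood]
        refine (Finset.sum_bij
          (fun (x : Fin t × Fin t × Fin t × Fin t) (_ : x ∈ _) =>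
            twoE x.1 x.2.1 x.2.2.1 x.2.2.2) ?_ ?_ ?_ ?_).symm
        · intro x hx
          simp only [Finset.mem_filter, Finset.mem_univ, true_and] at hx
          obtain ⟨h1, h2, h3, h4, h5⟩ := hx
          refine Finset.mem_filter.mpr ⟨Finset.mem_univ _, ?_⟩
          exact twoE_iso h1.ne h4 (h1.trans h3).ne h5 h3.ne h2.ne
            hab₀.ne hac₀ (hab₀.trans hbd₀).ne hbc₀ hbd₀.ne hcd₀.ne
        · intro x₁ hx₁ x₂ hx₂ heq
          simp only [Finset.mem_filter, Finset.mem_univ, true_and] at hx₁ hx₂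
          obtain ⟨g1, g2, g3, g4, g5⟩ := hx₁
          obtain ⟨k1, k2, k3, k4, k5⟩ := hx₂
          obtain ⟨e1, e2, e3, e4⟩ := twoE_inj g1 g2 g3 g4 k1 k2 k3 k4 heq
          exact Prod.ext_iff.mpr ⟨e1, Prod.ext_iff.mpr ⟨e2, Prod.ext_iff.mpr ⟨e3, e4⟩⟩⟩
        · intro G' hG'
          obtain ⟨-, ⟨iso⟩⟩ := Finset.mem_filter.mp hG'
          obtain ⟨h2', h1'⟩ := iso_transfer iso hcard hdisj
          obtain ⟨a, b, c, d, h1, h2, h3, h4, h5, hEq⟩ := exists_twoE h2' h1'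
          exact ⟨(a, b, c, d),
            Finset.mem_filter.mpr ⟨Finset.mem_univ _, h1, h2, h3, h4, h5⟩, hEq.symm⟩
        · intro x hx
          simp only [Finset.mem_filter, Finset.mem_univ, true_and] at hx
          obtain ⟨h1, h2, h3, h4, h5⟩ := hx
          have hprod := prod_choose_twoE h1 h2 h3 h4 h5
          rw [← Nat.cast_prod, hprod]
    _ = ∑ b : Fin t, ∑ d : Fin t,
          if b < d then ((b : ℕ) * ((d : ℕ) - 2)) •
            (1 / ((t.factorial : ℝ) * (((b : ℕ) * (d : ℕ) : ℕ) : ℝ))) else 0 :=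
        count_step (fun b d => 1 / ((t.factorial : ℝ) * (((b : ℕ) * (d : ℕ) : ℕ) : ℝ)))
    _ = ∑ b : Fin t, ∑ d : Fin t,
          (fun p q : ℕ => if p < q then ((p * (q - 2) : ℕ) : ℝ) *
            (1 / ((t.factorial : ℝ) * ((p * q : ℕ) : ℝ))) else 0) (b : ℕ) (d : ℕ) := by
        refine Finset.sum_congr rfl fun b _ => Finset.sum_congr rfl fun d _ => ?_
        dsimp only
        by_cases h : b < d
        · rw [if_pos h, if_pos (Fin.lt_def.mp h)]
          rw [nsmul_eq_mul]
        · rw [if_neg h, if_neg (fun hc => h (Fin.lt_def.mpr hc))]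
    _ = ∑ p ∈ Finset.range t, ∑ q ∈ Finset.range t,
          if p < q then ((p * (q - 2) : ℕ) : ℝ) *
            (1 / ((t.factorial : ℝ) * ((p * q : ℕ) : ℝ))) else 0 := by
        rw [← Fin.sum_univ_eq_sum_range (fun p => ∑ q ∈ Finset.range t,
          if p < q then ((p * (q - 2) : ℕ) : ℝ) *
            (1 / ((t.factorial : ℝ) * ((p * q : ℕ) : ℝ))) else 0) t]
        exact Finset.sum_congr rfl fun b _ =>
          Fin.sum_univ_eq_sum_range (fun q => if (b : ℕ) < q then (((b : ℕ) * (q - 2) : ℕ) : ℝ) *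
            (1 / ((t.factorial : ℝ) * (((b : ℕ) * q : ℕ) : ℝ))) else 0) t
    _ = (1 / (t.factorial : ℝ)) *
          ∑ i ∈ Finset.Icc 2 t, ∑ j ∈ Finset.Icc (i + 1) t,
            ((j : ℝ) - 3) / ((j : ℝ) - 1) := arith_step t
end

section
/- Let G be a simple graph on t ≥ 1 vertices. Under the random growth process, the probability that the random graph produced after t steps is isomorphic to G equals Σ_{G' a labeled copy of G} 1/(t! · ∏_{i=1}^{t} C(i−1, d_i(G'))), where the sum is over all simple graphs G' on the vertex set {1,…,t} isomorphic to G, d_i(G') is the number of neighbors j < i of vertex i in G', and C(n,k) is the binomial coefficient. -/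
open Finset

/-- Extend a graph on `{1,…,m}` by a new vertex (the last one) joined to
exactly the vertices in `S`. -/
def extendGraph {m : ℕ} (G : SimpleGraph (Fin m)) (S : Finset (Fin m)) :
    SimpleGraph (Fin (m + 1)) :=
  SimpleGraph.fromRel (fun u v =>
    (∃ (hu : u ≠ Fin.last m) (hv : v ≠ Fin.last m),
      G.Adj (u.castPred hu) (v.castPred hv)) ∨
    (u = Fin.last m ∧ ∃ hv : v ≠ Fin.last m, v.castPred hv ∈ S))

/-- The random growth process: starting from the one-vertex graph, at each step a
degree `k` is chosen uniformly at random from `{0,…,i-1}` (where `i-1` is the current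
number of vertices), then a uniformly random `k`-subset `S` of the existing vertices
is chosen, and a new vertex is added joined to each vertex of `S`; all choices at
different steps are independent.  `growthProcess t` is the distribution of the
resulting random graph on `t` vertices. -/
noncomputable def growthProcess : (t : ℕ) → PMF (SimpleGraph (Fin t))
  | 0 => PMF.pure ⊥
  | m + 1 =>
    (growthProcess m).bind fun G =>
      (PMF.uniformOfFintype (Fin (m + 1))).bind fun k =>
        (PMF.uniformOfFinset ((Finset.univ : Finset (Fin m)).powersetCard k.val)
            (by
              rw [Finset.powersetCard_nonempty]
              simpa using Nat.lt_succ_iff.mp k.isLt)).bind fun S =>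
          PMF.pure (extendGraph G S)

namespace GrowthAux

open scoped Classical

variable {m t : ℕ}

lemma csl (u : Fin m) : u.castSucc ≠ Fin.last m := (Fin.castSucc_lt_last u).ne

/-- Restriction of a graph on `Fin (m+1)` to the first `m` vertices. -/
def restrictG (H : SimpleGraph (Fin (m+1))) : SimpleGraph (Fin m) :=
  H.comap Fin.castSucc

/-- The neighbours of the last vertex. -/
noncomputable def lastNbrs (H : SimpleGraph (Fin (m+1))) : Finset (Fin m) :=
  Finset.univ.filter fun j => H.Adj (Fin.last m) j.castSucc

lemma restrict_extend (G : SimpleGraph (Fin m)) (S : Finset (Fin m)) :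
    restrictG (extendGraph G S) = G := by
  ext u v
  simp only [restrictG, SimpleGraph.comap_adj, extendGraph, SimpleGraph.fromRel_adj,
    csl, Fin.castPred_castSucc, ne_eq, not_false_eq_true, exists_true_left, false_and,
    and_false, or_false, exists_false, Fin.castSucc_inj]
  constructor
  · rintro ⟨hne, h | h⟩
    exacts [h, h.symm]
  · intro h
    exact ⟨h.ne, Or.inl h⟩

lemma lastNbrs_extend (G : SimpleGraph (Fin m)) (S : Finset (Fin m)) :
    lastNbrs (extendGraph G S) = S := by
  ext j
  simp only [lastNbrs, Finset.mem_filter, Finset.mem_univ, true_and, extendGraph,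
    SimpleGraph.fromRel_adj, csl, Fin.castPred_castSucc, ne_eq, not_false_eq_true,
    not_true_eq_false, exists_true_left, exists_false, false_and, and_false, or_false,
    exists_prop_of_false, IsEmpty.exists_iff, true_and, false_or, and_true]
  constructor
  · rintro ⟨-, h⟩
    exact h
  · intro h
    exact ⟨(csl j).symm, h⟩

lemma extend_restrict (H : SimpleGraph (Fin (m+1))) :
    extendGraph (restrictG H) (lastNbrs H) = H := by
  ext u v
  simp only [extendGraph, SimpleGraph.fromRel_adj, restrictG, SimpleGraph.comap_adj,
    lastNbrs, Finset.mem_filter, Finset.mem_univ, true_and, Fin.castSucc_castPred]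
  constructor
  · rintro ⟨hne, h | h⟩
    · rcases h with ⟨hu, hv, h⟩ | ⟨hu, hv, h⟩
      · exact h
      · rw [hu]; exact h
    · rcases h with ⟨hu, hv, h⟩ | ⟨hv, hu, h⟩
      · exact h.symm
      · rw [hv]; exact h.symm
  · intro h
    refine ⟨h.ne, ?_⟩
    by_cases hu : u = Fin.last m
    · subst hu
      have hv : v ≠ Fin.last m := fun hv => by subst hv; exact h.ne rfl
      exact Or.inl (Or.inr ⟨rfl, hv, h⟩)
    · by_cases hv : v = Fin.last m
      · subst hv
        exact Or.inr (Or.inr ⟨rfl, hu, h.symm⟩)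
      · exact Or.inl (Or.inl ⟨hu, hv, h⟩)

lemma extend_eq_iff (G : SimpleGraph (Fin m)) (S : Finset (Fin m)) (H : SimpleGraph (Fin (m+1))) :
    extendGraph G S = H ↔ G = restrictG H ∧ S = lastNbrs H := by
  constructor
  · rintro rfl; exact ⟨(restrict_extend G S).symm, (lastNbrs_extend G S).symm⟩
  · rintro ⟨rfl, rfl⟩; exact extend_restrict H

lemma dBelow_eq (H : SimpleGraph (Fin t)) (i : Fin t) :
    dBelow H i = (univ.filter fun j => H.Adj i j ∧ j < i).card := by
  rw [dBelow, ← Set.ncard_coe_finset]; congr 1; ext j; simp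

lemma dBelow_le (H : SimpleGraph (Fin t)) (i : Fin t) : dBelow H i ≤ i.val := by
  rw [dBelow_eq]
  calc (univ.filter fun j => H.Adj i j ∧ j < i).card
      ≤ (Finset.Iio i).card :=
        Finset.card_le_card (by intro j hj; simp only [mem_filter] at hj; simpa using hj.2.2)
    _ = i.val := by simpa using Fin.card_Iio i

lemma dBelow_last (H : SimpleGraph (Fin (m+1))) :
    dBelow H (Fin.last m) = (lastNbrs H).card := by
  rw [dBelow_eq]
  have : (univ.filter fun j : Fin (m+1) => H.Adj (Fin.last m) j ∧ j < Fin.last m)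
      = (lastNbrs H).map Fin.castSuccEmb := by
    ext j
    simp only [mem_filter, mem_univ, true_and, Finset.mem_map, lastNbrs,
      Fin.castSuccEmb_apply]
    constructor
    · rintro ⟨h1, h2⟩
      refine ⟨j.castPred h2.ne, ?_, Fin.castSucc_castPred j h2.ne⟩
      rw [Fin.castSucc_castPred]
      exact h1
    · rintro ⟨a, ha, rfl⟩
      exact ⟨ha, Fin.castSucc_lt_last a⟩
  rw [this, Finset.card_map]

lemma dBelow_restrict (H : SimpleGraph (Fin (m+1))) (i : Fin m) :
    dBelow (restrictG H) i = dBelow H i.castSucc := by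
  rw [dBelow_eq, dBelow_eq]
  have : (univ.filter fun j : Fin (m+1) => H.Adj i.castSucc j ∧ j < i.castSucc)
      = (univ.filter fun j : Fin m => (restrictG H).Adj i j ∧ j < i).map Fin.castSuccEmb := by
    ext j
    simp only [mem_filter, mem_univ, true_and, Finset.mem_map, Fin.castSuccEmb_apply,
      restrictG, SimpleGraph.comap_adj]
    constructor
    · rintro ⟨h1, h2⟩
      have hne : j ≠ Fin.last m := (h2.trans (Fin.castSucc_lt_last i)).ne
      refine ⟨j.castPred hne, ⟨?_, ?_⟩, Fin.castSucc_castPred j hne⟩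
      · rw [Fin.castSucc_castPred]; exact h1
      · have := h2
        rwa [← Fin.castSucc_castPred j hne, Fin.castSucc_lt_castSucc_iff] at this
    · rintro ⟨a, ⟨ha1, ha2⟩, rfl⟩
      exact ⟨ha1, (Fin.castSucc_lt_castSucc_iff).mpr ha2⟩
  rw [this, Finset.card_map]

lemma lastNbrs_card_le (H : SimpleGraph (Fin (m+1))) : (lastNbrs H).card ≤ m := by
  simpa using Finset.card_le_univ (lastNbrs H)

/-- The key pointwise formula. -/
lemma growth_apply : ∀ (t : ℕ) (H : SimpleGraph (Fin t)),
    growthProcess t H =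
      1 / ((t.factorial : ENNReal) * ∏ i : Fin t, ((i : ℕ).choose (dBelow H i) : ENNReal)) := by
  intro t
  induction t with
  | zero =>
    intro H
    have hH : H = ⊥ := by ext a b; exact a.elim0
    subst hH
    simp [growthProcess, PMF.pure_apply]
  | succ m ih =>
    intro H
    set d := (lastNbrs H).card with hd
    have hdm : d ≤ m := lastNbrs_card_le H
    -- inner bind over S
    have hS : ∀ (G : SimpleGraph (Fin m)) (k : Fin (m+1)) (hne),
        ((PMF.uniformOfFinset ((Finset.univ : Finset (Fin m)).powersetCard k.val) hne).bind
          fun S => PMF.pure (extendGraph G S)) H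
        = if G = restrictG H ∧ k.val = d then ((m.choose k.val : ENNReal))⁻¹ else 0 := by
      intro G k hne
      rw [PMF.bind_apply, tsum_fintype]
      rw [Finset.sum_eq_single (lastNbrs H)]
      · rw [PMF.uniformOfFinset_apply, PMF.pure_apply]
        have hiff : H = extendGraph G (lastNbrs H) ↔ G = restrictG H := by
          rw [eq_comm, extend_eq_iff]
          simp
        by_cases hG : G = restrictG H
        · have hmem : lastNbrs H ∈ (Finset.univ : Finset (Fin m)).powersetCard k.val
              ↔ k.val = d := by
            rw [Finset.mem_powersetCard_univ, eq_comm, hd]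
          by_cases hk : k.val = d
          · rw [if_pos (hmem.mpr hk), if_pos (hiff.mpr hG), if_pos ⟨hG, hk⟩, mul_one,
              Finset.card_powersetCard]
            simp
          · rw [if_neg (fun h => hk (hmem.mp h)), zero_mul,
              if_neg (fun h : G = restrictG H ∧ (k : ℕ) = d => hk h.2)]
        · rw [if_neg (fun h => hG (hiff.mp h)), mul_zero,
            if_neg (fun h : G = restrictG H ∧ (k : ℕ) = d => hG h.1)]
      · intro S hS hSne
        rw [PMF.pure_apply, if_neg, mul_zero]
        intro hHe
        exact hSne ((extend_eq_iff G S H).mp hHe.symm).2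
      · simp
    -- middle bind over k
    have hk : ∀ (G : SimpleGraph (Fin m)),
        ((PMF.uniformOfFintype (Fin (m + 1))).bind fun k =>
          (PMF.uniformOfFinset ((Finset.univ : Finset (Fin m)).powersetCard k.val)
            (by rw [Finset.powersetCard_nonempty]
                simpa using Nat.lt_succ_iff.mp k.isLt)).bind fun S =>
              PMF.pure (extendGraph G S)) H
        = if G = restrictG H then (((m : ENNReal) + 1))⁻¹ * ((m.choose d : ENNReal))⁻¹ else 0 := by
      intro G
      rw [PMF.bind_apply, tsum_fintype]
      rw [Finset.sum_eq_single (⟨d, Nat.lt_succ_of_le hdm⟩ : Fin (m+1))]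
      · rw [PMF.uniformOfFintype_apply, hS]
        by_cases hG : G = restrictG H
        · rw [if_pos ⟨hG, rfl⟩, if_pos hG, Fintype.card_fin]
          congr 2
          push_cast
          ring
        · rw [if_neg (fun h => hG h.1), if_neg hG, mul_zero]
      · intro k hk hkne
        rw [hS, if_neg, mul_zero]
        rintro ⟨-, hkd⟩
        exact hkne (Fin.ext hkd)
      · simp
    -- outer bind over G
    have main : growthProcess (m+1) H
        = growthProcess m (restrictG H) * ((((m : ENNReal) + 1))⁻¹ * ((m.choose d : ENNReal))⁻¹) := by
      rw [growthProcess, PMF.bind_apply, tsum_fintype]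
      rw [Finset.sum_eq_single (restrictG H)]
      · rw [hk, if_pos rfl]
      · intro G hG hGne
        rw [hk, if_neg hGne, mul_zero]
      · simp
    rw [main, ih]
    -- arithmetic
    have hprod : (∏ i : Fin (m+1), ((i : ℕ).choose (dBelow H i) : ENNReal))
        = (∏ i : Fin m, ((i : ℕ).choose (dBelow (restrictG H) i) : ENNReal))
            * (m.choose d : ENNReal) := by
      rw [Fin.prod_univ_castSucc]
      congr 1
      · exact Finset.prod_congr rfl fun i _ => by rw [dBelow_restrict, Fin.coe_castSucc]
      · rw [dBelow_last, Fin.val_last, ← hd]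
    rw [hprod]
    have hfact : ((m+1).factorial : ENNReal) = ((m : ENNReal) + 1) * (m.factorial : ENNReal) := by
      rw [Nat.factorial_succ]
      push_cast
      ring
    rw [hfact]
    -- now pure ENNReal algebra
    set A : ENNReal := (m.factorial : ENNReal) with hA
    set B : ENNReal := ∏ i : Fin m, ((i : ℕ).choose (dBelow (restrictG H) i) : ENNReal) with hB
    set C : ENNReal := (m.choose d : ENNReal) with hC
    have hA0 : A ≠ 0 := by simp [hA, Nat.factorial_ne_zero]
    have hAt : A ≠ ⊤ := by simp [hA]
    have hB0 : B ≠ 0 := by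
      rw [hB]
      refine Finset.prod_ne_zero_iff.mpr fun i _ => ?_
      simp only [ne_eq, Nat.cast_eq_zero]
      exact (Nat.choose_pos (dBelow_le _ i)).ne'
    have hBt : B ≠ ⊤ := by
      rw [hB]
      exact (ENNReal.prod_lt_top fun i _ => ENNReal.natCast_lt_top _).ne
    have hC0 : C ≠ 0 := by
      rw [hC]
      simpa using (Nat.choose_pos hdm).ne'
    have hCt : C ≠ ⊤ := by simp [hC]
    have hM0 : ((m : ENNReal) + 1) ≠ 0 := by simp
    have hMt : ((m : ENNReal) + 1) ≠ ⊤ := by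
      simp [ENNReal.add_ne_top]
    rw [one_div, one_div, ENNReal.mul_inv (Or.inl hA0) (Or.inl hAt),
      ENNReal.mul_inv (Or.inl (mul_ne_zero hM0 hA0))
        (Or.inl (ENNReal.mul_ne_top hMt hAt)),
      ENNReal.mul_inv (Or.inl hM0) (Or.inl hMt),
      ENNReal.mul_inv (Or.inl hB0) (Or.inl hBt)]
    ring

end GrowthAux

open Classical in
theorem growthProcess_prob_isomorphic {t : ℕ} (ht : 1 ≤ t) (G : SimpleGraph (Fin t)) :
    (growthProcess t).toOuterMeasure {H | Nonempty (H ≃g G)} =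
      ∑ H ∈ Finset.univ.filter (fun H : SimpleGraph (Fin t) => Nonempty (H ≃g G)),
        1 / ((t.factorial : ENNReal) * ∏ i : Fin t, ((i : ℕ).choose (dBelow H i) : ENNReal)) := by
  classical
  calc (growthProcess t).toOuterMeasure {H | Nonempty (H ≃g G)}
      = ∑ H : SimpleGraph (Fin t),
          Set.indicator {H | Nonempty (H ≃g G)} (growthProcess t) H := by
        rw [PMF.toOuterMeasure_apply, tsum_fintype]
    _ = ∑ H ∈ Finset.univ.filter (fun H : SimpleGraph (Fin t) => Nonempty (H ≃g G)),
          growthProcess t H := by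
        rw [Finset.sum_filter]
        exact Finset.sum_congr rfl fun H _ => by
          simp only [Set.indicator_apply, Set.mem_setOf_eq]
    _ = _ := Finset.sum_congr rfl fun H _ => GrowthAux.growth_apply t H
end
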